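/- arXiv:2605.29426 — 3 statements merged into one kernel-verified Lean document; each statement's English description precedes it below -/
import Mathlib

section
/- Let δ_1,…,δ_b be 4-wise independent Rademacher random variables, μ_1,…,μ_b ∈ ℝ^L with Σ_i ‖μ_i‖² = ρ², and H an orthogonal b×b matrix with all entries ±1/√b. Define Z_r = ‖Σ_i H_{r,i} δ_i μ_i‖² for r ∈ [b]. Then for all r_1, r_2, E[Z_{r_1} Z_{r_2}] ≤ 3ρ⁴/b². -/
open MeasureTheory

lemma BRHT_even_pairing {α} [DecidableEq α] (i₁ i₂ i₃ i₄ : α)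
    (h : ∀ x, Even (({i₁, i₂, i₃, i₄} : Multiset α).count x)) :
    (i₁ = i₂ ∧ i₃ = i₄) ∨ (i₁ = i₃ ∧ i₂ = i₄) ∨ (i₁ = i₄ ∧ i₂ = i₃) := by
  have c1 := h i₁; have c2 := h i₂; have c3 := h i₃
  simp only [Multiset.insert_eq_cons, Multiset.count_cons, Multiset.count_singleton,
    Nat.even_iff] at c1 c2 c3
  by_cases h12 : i₁ = i₂ <;> by_cases h13 : i₁ = i₃ <;> by_cases h14 : i₁ = i₄ <;>
    by_cases h23 : i₂ = i₃ <;> by_cases h24 : i₂ = i₄ <;> by_cases h34 : i₃ = i₄ <;>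
    simp_all <;> omega

lemma BRHT_cross_bound {b L : ℕ} (μ : Fin b → Fin L → ℝ) :
    (∑ i : Fin b, ∑ i' : Fin b,
        (∑ j, |μ i j| * |μ i' j|) * (∑ k, |μ i k| * |μ i' k|))
      ≤ (∑ i, ∑ j, μ i j ^ 2) * (∑ i, ∑ j, μ i j ^ 2) := by
  have key : ∀ i i' : Fin b, (∑ j, |μ i j| * |μ i' j|) * (∑ k, |μ i k| * |μ i' k|)
      ≤ (∑ j, μ i j ^ 2) * (∑ j, μ i' j ^ 2) := by
    intro i i'
    have h := Finset.sum_mul_sq_le_sq_mul_sq Finset.univ (fun j => |μ i j|) (fun j => |μ i' j|)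
    simp only [sq_abs] at h
    calc (∑ j, |μ i j| * |μ i' j|) * (∑ k, |μ i k| * |μ i' k|)
        = (∑ j, |μ i j| * |μ i' j|) ^ 2 := by ring
      _ ≤ _ := h
  calc (∑ i : Fin b, ∑ i' : Fin b,
        (∑ j, |μ i j| * |μ i' j|) * (∑ k, |μ i k| * |μ i' k|))
      ≤ ∑ i : Fin b, ∑ i' : Fin b, (∑ j, μ i j ^ 2) * (∑ j, μ i' j ^ 2) :=
        Finset.sum_le_sum fun i _ => Finset.sum_le_sum fun i' _ => key i i'
    _ = _ := (Finset.sum_mul_sum _ _ _ _).symm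

lemma BRHT_sum_factor {b L : ℕ} (f g : Fin b → Fin L → ℝ) :
    (∑ j : Fin L, ∑ k : Fin L, ∑ i : Fin b, ∑ i' : Fin b, f i j * g i' k)
      = (∑ j, ∑ i, f i j) * (∑ k, ∑ i', g i' k) := by
  rw [Finset.sum_mul_sum]
  exact Finset.sum_congr rfl fun j _ => Finset.sum_congr rfl fun k _ =>
    (Finset.sum_mul_sum _ _ _ _).symm

lemma BRHT_sum_swap {b L : ℕ} (F : Fin b → Fin b → Fin L → Fin L → ℝ) :
    (∑ j : Fin L, ∑ k : Fin L, ∑ i : Fin b, ∑ i' : Fin b, F i i' j k)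
      = ∑ i : Fin b, ∑ i' : Fin b, ∑ j : Fin L, ∑ k : Fin L, F i i' j k := by
  calc (∑ j : Fin L, ∑ k : Fin L, ∑ i : Fin b, ∑ i' : Fin b, F i i' j k)
      = ∑ j : Fin L, ∑ i : Fin b, ∑ k : Fin L, ∑ i' : Fin b, F i i' j k :=
        Finset.sum_congr rfl fun j _ => Finset.sum_comm
    _ = ∑ i : Fin b, ∑ j : Fin L, ∑ k : Fin L, ∑ i' : Fin b, F i i' j k := Finset.sum_comm
    _ = ∑ i : Fin b, ∑ j : Fin L, ∑ i' : Fin b, ∑ k : Fin L, F i i' j k :=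
        Finset.sum_congr rfl fun i _ => Finset.sum_congr rfl fun j _ => Finset.sum_comm
    _ = ∑ i : Fin b, ∑ i' : Fin b, ∑ j : Fin L, ∑ k : Fin L, F i i' j k :=
        Finset.sum_congr rfl fun i _ => Finset.sum_comm

set_option maxHeartbeats 1600000 in
/-- Let `δ_1, …, δ_b` be 4-wise independent Rademacher random variables (so that
`E[δ_{i₁}δ_{i₂}δ_{i₃}δ_{i₄}] = 1` if the multiset of indices pairs up evenly and `0`
otherwise), `μ_1, …, μ_b ∈ ℝ^L` with `Σ_i ‖μ_i‖² = ρ²`, and `H` an orthogonal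
`b × b` matrix with all entries `±1/√b`. For `Z_r = ‖Σ_i H_{r,i} δ_i μ_i‖²`,
one has `E[Z_{r₁} Z_{r₂}] ≤ 3ρ⁴/b²` for all `r₁, r₂`. -/
theorem BRHT_block_second_moment {Ω : Type*} [MeasurableSpace Ω] (P : Measure Ω)
    [IsProbabilityMeasure P] (b L : ℕ) (hb : 0 < b)
    (δ : Fin b → Ω → ℝ) (hmeas : ∀ i, Measurable (δ i))
    (hsign : ∀ i ω, δ i ω = 1 ∨ δ i ω = -1)
    (h4wise : ∀ i₁ i₂ i₃ i₄ : Fin b,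
      ∫ ω, δ i₁ ω * δ i₂ ω * δ i₃ ω * δ i₄ ω ∂P =
        if ∀ x, Even (({i₁, i₂, i₃, i₄} : Multiset (Fin b)).count x) then 1 else 0)
    (μ : Fin b → Fin L → ℝ) (ρ : ℝ) (hρ : ρ ^ 2 = ∑ i, ∑ j, μ i j ^ 2)
    (H : Matrix (Fin b) (Fin b) ℝ) (hHorth : H * H.transpose = 1)
    (hHent : ∀ r i, H r i = 1 / Real.sqrt b ∨ H r i = -(1 / Real.sqrt b))
    (r₁ r₂ : Fin b) :
    ∫ ω, (∑ j, (∑ i, H r₁ i * δ i ω * μ i j) ^ 2) *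
          (∑ j, (∑ i, H r₂ i * δ i ω * μ i j) ^ 2) ∂P ≤ 3 * ρ ^ 4 / b ^ 2 := by
  classical
  have hb0 : (0:ℝ) < b := by exact_mod_cast hb
  have hs2 : (1 / Real.sqrt b) ^ 2 = 1 / b := by
    rw [div_pow, one_pow, Real.sq_sqrt hb0.le]
  have habs : ∀ r i, |H r i| = 1 / Real.sqrt b := by
    intro r i
    have h0 : (0:ℝ) ≤ 1 / Real.sqrt b := by positivity
    rcases hHent r i with h | h <;> rw [h] <;> simp [abs_of_nonneg h0]
  have hH2 : ∀ r i, (H r i) ^ 2 = 1 / b := by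
    intro r i
    rw [← sq_abs, habs, hs2]
  have habs4 : ∀ i i' : Fin b, |H r₁ i| * |H r₁ i'| * |H r₂ i| * |H r₂ i'| = 1 / b ^ 2 := by
    intro i i'
    rw [habs, habs, habs, habs,
      show (1/Real.sqrt b) * (1/Real.sqrt b) * (1/Real.sqrt b) * (1/Real.sqrt b)
        = ((1/Real.sqrt b) ^ 2) ^ 2 by ring, hs2]
    rw [div_pow, one_pow]
  -- integrability of products of signs
  have hEδ : ∀ i₁ i₂ i₃ i₄ : Fin b,
      Integrable (fun ω => δ i₁ ω * δ i₂ ω * δ i₃ ω * δ i₄ ω) P := by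
    intro i₁ i₂ i₃ i₄
    have hm : Measurable fun ω => δ i₁ ω * δ i₂ ω * δ i₃ ω * δ i₄ ω :=
      (((hmeas i₁).mul (hmeas i₂)).mul (hmeas i₃)).mul (hmeas i₄)
    refine (integrable_const (1:ℝ)).mono' hm.aestronglyMeasurable
      (Filter.Eventually.of_forall fun ω => ?_)
    have h1 : ∀ i, |δ i ω| = 1 := fun i => by rcases hsign i ω with h | h <;> simp [h]
    simp [Real.norm_eq_abs, abs_mul, h1]
  -- the coefficient function on the flattened index type
  set C : (Fin L × Fin L × Fin b × Fin b × Fin b × Fin b) → ℝ := fun p =>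
    H r₁ p.2.2.1 * H r₁ p.2.2.2.1 * H r₂ p.2.2.2.2.1 * H r₂ p.2.2.2.2.2 *
      (μ p.2.2.1 p.1 * μ p.2.2.2.1 p.1 * μ p.2.2.2.2.1 p.2.1 * μ p.2.2.2.2.2 p.2.1) with hC
  set D : (Fin L × Fin L × Fin b × Fin b × Fin b × Fin b) → Ω → ℝ := fun p ω =>
    δ p.2.2.1 ω * δ p.2.2.2.1 ω * δ p.2.2.2.2.1 ω * δ p.2.2.2.2.2 ω with hD
  -- pointwise expansion
  have hpt : ∀ ω, (∑ j, (∑ i, H r₁ i * δ i ω * μ i j) ^ 2) *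
      (∑ j, (∑ i, H r₂ i * δ i ω * μ i j) ^ 2) = ∑ p : (Fin L × Fin L × Fin b × Fin b × Fin b × Fin b), C p * D p ω := by
    intro ω
    have flat : (∑ p : (Fin L × Fin L × Fin b × Fin b × Fin b × Fin b), C p * D p ω)
        = ∑ j : Fin L, ∑ k : Fin L, ∑ i₁ : Fin b, ∑ i₂ : Fin b, ∑ i₃ : Fin b, ∑ i₄ : Fin b,
          (H r₁ i₁ * H r₁ i₂ * H r₂ i₃ * H r₂ i₄ *
            (μ i₁ j * μ i₂ j * μ i₃ k * μ i₄ k)) * (δ i₁ ω * δ i₂ ω * δ i₃ ω * δ i₄ ω) := by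
      simp only [hC, hD, Fintype.sum_prod_type]
    rw [flat, Finset.sum_mul_sum]
    refine Finset.sum_congr rfl fun j _ => Finset.sum_congr rfl fun k _ => ?_
    rw [pow_two, Finset.sum_mul_sum, Finset.sum_mul]
    refine Finset.sum_congr rfl fun i₁ _ => ?_
    rw [Finset.sum_mul]
    refine Finset.sum_congr rfl fun i₂ _ => ?_
    rw [pow_two, Finset.sum_mul_sum, Finset.mul_sum]
    refine Finset.sum_congr rfl fun i₃ _ => ?_
    rw [Finset.mul_sum]
    refine Finset.sum_congr rfl fun i₄ _ => ?_
    ring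
  have h1 : (∫ ω, (∑ j, (∑ i, H r₁ i * δ i ω * μ i j) ^ 2) *
      (∑ j, (∑ i, H r₂ i * δ i ω * μ i j) ^ 2) ∂P)
      = ∑ p : (Fin L × Fin L × Fin b × Fin b × Fin b × Fin b), C p * (if (∀ x, Even (({p.2.2.1, p.2.2.2.1, p.2.2.2.2.1, p.2.2.2.2.2} :
          Multiset (Fin b)).count x)) then (1:ℝ) else 0) := by
    calc (∫ ω, (∑ j, (∑ i, H r₁ i * δ i ω * μ i j) ^ 2) *
        (∑ j, (∑ i, H r₂ i * δ i ω * μ i j) ^ 2) ∂P)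
        = ∫ ω, ∑ p : (Fin L × Fin L × Fin b × Fin b × Fin b × Fin b), C p * D p ω ∂P := by simp only [hpt]
      _ = ∑ p : (Fin L × Fin L × Fin b × Fin b × Fin b × Fin b), ∫ ω, C p * D p ω ∂P :=
          integral_finset_sum _ (fun p _ => (hEδ _ _ _ _).const_mul _)
      _ = ∑ p : (Fin L × Fin L × Fin b × Fin b × Fin b × Fin b), C p * ∫ ω, D p ω ∂P := by
          exact Finset.sum_congr rfl fun p _ => integral_const_mul _ _
      _ = _ := Finset.sum_congr rfl fun p _ => by rw [hD]; rw [h4wise]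
  rw [h1]
  -- the three pairing indicators
  set E₁ : (Fin L × Fin L × Fin b × Fin b × Fin b × Fin b) → ℝ := fun p => if p.2.2.1 = p.2.2.2.1 ∧ p.2.2.2.2.1 = p.2.2.2.2.2 then 1 else 0
    with hE₁
  set E₂ : (Fin L × Fin L × Fin b × Fin b × Fin b × Fin b) → ℝ := fun p => if p.2.2.1 = p.2.2.2.2.1 ∧ p.2.2.2.1 = p.2.2.2.2.2 then 1 else 0
    with hE₂
  set E₃ : (Fin L × Fin L × Fin b × Fin b × Fin b × Fin b) → ℝ := fun p => if p.2.2.1 = p.2.2.2.2.2 ∧ p.2.2.2.1 = p.2.2.2.2.1 then 1 else 0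
    with hE₃
  have hterm : ∀ p : (Fin L × Fin L × Fin b × Fin b × Fin b × Fin b), C p * (if (∀ x, Even (({p.2.2.1, p.2.2.2.1, p.2.2.2.2.1, p.2.2.2.2.2} :
      Multiset (Fin b)).count x)) then (1:ℝ) else 0)
      ≤ |C p| * E₁ p + |C p| * E₂ p + |C p| * E₃ p := by
    intro p
    have hn1 : (0:ℝ) ≤ |C p| * E₁ p := mul_nonneg (abs_nonneg _) (by rw [hE₁]; dsimp; split <;> norm_num)
    have hn2 : (0:ℝ) ≤ |C p| * E₂ p := mul_nonneg (abs_nonneg _) (by rw [hE₂]; dsimp; split <;> norm_num)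
    have hn3 : (0:ℝ) ≤ |C p| * E₃ p := mul_nonneg (abs_nonneg _) (by rw [hE₃]; dsimp; split <;> norm_num)
    by_cases hc : ∀ x, Even (({p.2.2.1, p.2.2.2.1, p.2.2.2.2.1, p.2.2.2.2.2} :
        Multiset (Fin b)).count x)
    · rw [if_pos hc, mul_one]
      have hle : C p ≤ |C p| := le_abs_self _
      rcases BRHT_even_pairing _ _ _ _ hc with h | h | h
      · have : E₁ p = 1 := by rw [hE₁]; exact if_pos h
        nlinarith [abs_nonneg (C p)]
      · have : E₂ p = 1 := by rw [hE₂]; exact if_pos h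
        nlinarith [abs_nonneg (C p)]
      · have : E₃ p = 1 := by rw [hE₃]; exact if_pos h
        nlinarith [abs_nonneg (C p)]
    · rw [if_neg hc, mul_zero]
      linarith
  have hρ2 : (0:ℝ) ≤ ∑ i, ∑ j, μ i j ^ 2 := by positivity
  -- Bound T₁
  have hT1 : (∑ p : (Fin L × Fin L × Fin b × Fin b × Fin b × Fin b), |C p| * E₁ p) ≤ ρ ^ 4 / b ^ 2 := by
    have e1 : (∑ p : (Fin L × Fin L × Fin b × Fin b × Fin b × Fin b), |C p| * E₁ p)
        = ∑ j, ∑ k, ∑ i, ∑ i', (1 / (b:ℝ) * μ i j ^ 2) * (1 / (b:ℝ) * μ i' k ^ 2) := by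
      rw [hC, hE₁]
      simp [Fintype.sum_prod_type, mul_ite, mul_one, mul_zero, ite_and,
        Finset.sum_ite_eq]
      refine Finset.sum_congr rfl fun j _ => Finset.sum_congr rfl fun k _ =>
        Finset.sum_congr rfl fun i _ => Finset.sum_congr rfl fun i' _ => ?_
      rw [show H r₁ i * H r₁ i * |H r₂ i'| * |H r₂ i'| *
          (μ i j * μ i j * |μ i' k| * |μ i' k|)
          = (H r₁ i) ^ 2 * (H r₂ i') ^ 2 * (μ i j ^ 2 * μ i' k ^ 2) by
            rw [← sq_abs (H r₂ i'), ← sq_abs (μ i' k)]; ring]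
      rw [hH2, hH2]
      ring
    rw [e1, BRHT_sum_factor]
    have e2 : (∑ j, ∑ i, 1 / (b:ℝ) * μ i j ^ 2) = ρ ^ 2 / b := by
      rw [Finset.sum_comm]
      simp only [← Finset.mul_sum]
      rw [← hρ]; ring
    rw [e2]
    exact le_of_eq (by ring)
  -- Bound T₂
  have hT2 : (∑ p : (Fin L × Fin L × Fin b × Fin b × Fin b × Fin b), |C p| * E₂ p) ≤ ρ ^ 4 / b ^ 2 := by
    have e1 : (∑ p : (Fin L × Fin L × Fin b × Fin b × Fin b × Fin b), |C p| * E₂ p)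
        = ∑ j, ∑ k, ∑ i, ∑ i', 1 / (b:ℝ) ^ 2 *
            ((|μ i j| * |μ i' j|) * (|μ i k| * |μ i' k|)) := by
      rw [hC, hE₂]
      simp [Fintype.sum_prod_type, mul_ite, mul_one, mul_zero, ite_and,
        Finset.sum_ite_eq]
      refine Finset.sum_congr rfl fun j _ => Finset.sum_congr rfl fun k _ =>
        Finset.sum_congr rfl fun i _ => Finset.sum_congr rfl fun i' _ => ?_
      rw [show |H r₁ i| * |H r₁ i'| * |H r₂ i| * |H r₂ i'| *
          (|μ i j| * |μ i' j| * |μ i k| * |μ i' k|)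
          = (|H r₁ i| * |H r₁ i'| * |H r₂ i| * |H r₂ i'|) *
            ((|μ i j| * |μ i' j|) * (|μ i k| * |μ i' k|)) by ring, habs4]
      ring_nf
    rw [e1]
    simp only [← Finset.mul_sum]
    rw [BRHT_sum_swap (fun i i' j k => (|μ i j| * |μ i' j|) * (|μ i k| * |μ i' k|))]
    have e2 : (∑ i : Fin b, ∑ i' : Fin b, ∑ j : Fin L, ∑ k : Fin L,
        (|μ i j| * |μ i' j|) * (|μ i k| * |μ i' k|))
        = ∑ i : Fin b, ∑ i' : Fin b,
            (∑ j, |μ i j| * |μ i' j|) * (∑ k, |μ i k| * |μ i' k|) :=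
      Finset.sum_congr rfl fun i _ => Finset.sum_congr rfl fun i' _ =>
        (Finset.sum_mul_sum _ _ _ _).symm
    rw [e2]
    calc 1 / (b:ℝ) ^ 2 * ∑ i : Fin b, ∑ i' : Fin b,
          (∑ j, |μ i j| * |μ i' j|) * (∑ k, |μ i k| * |μ i' k|)
        ≤ 1 / (b:ℝ) ^ 2 * ((∑ i, ∑ j, μ i j ^ 2) * (∑ i, ∑ j, μ i j ^ 2)) := by
          have := BRHT_cross_bound μ
          have hbp : (0:ℝ) ≤ 1 / (b:ℝ) ^ 2 := by positivity
          nlinarith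
      _ = ρ ^ 4 / b ^ 2 := by rw [← hρ]; ring
  -- Bound T₃
  have hT3 : (∑ p : (Fin L × Fin L × Fin b × Fin b × Fin b × Fin b), |C p| * E₃ p) ≤ ρ ^ 4 / b ^ 2 := by
    have e1 : (∑ p : (Fin L × Fin L × Fin b × Fin b × Fin b × Fin b), |C p| * E₃ p)
        = ∑ j, ∑ k, ∑ i, ∑ i', 1 / (b:ℝ) ^ 2 *
            ((|μ i j| * |μ i' j|) * (|μ i k| * |μ i' k|)) := by
      rw [hC, hE₃]
      simp [Fintype.sum_prod_type, mul_ite, mul_one, mul_zero, ite_and,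
        Finset.sum_ite_eq]
      refine Finset.sum_congr rfl fun j _ => Finset.sum_congr rfl fun k _ =>
        Finset.sum_congr rfl fun i _ => Finset.sum_congr rfl fun i' _ => ?_
      rw [show |H r₁ i| * |H r₁ i'| * |H r₂ i'| * |H r₂ i| *
          (|μ i j| * |μ i' j| * |μ i' k| * |μ i k|)
          = (|H r₁ i| * |H r₁ i'| * |H r₂ i| * |H r₂ i'|) *
            ((|μ i j| * |μ i' j|) * (|μ i k| * |μ i' k|)) by ring, habs4]
      ring_nf
    rw [e1]
    simp only [← Finset.mul_sum]
    rw [BRHT_sum_swap (fun i i' j k => (|μ i j| * |μ i' j|) * (|μ i k| * |μ i' k|))]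
    have e2 : (∑ i : Fin b, ∑ i' : Fin b, ∑ j : Fin L, ∑ k : Fin L,
        (|μ i j| * |μ i' j|) * (|μ i k| * |μ i' k|))
        = ∑ i : Fin b, ∑ i' : Fin b,
            (∑ j, |μ i j| * |μ i' j|) * (∑ k, |μ i k| * |μ i' k|) :=
      Finset.sum_congr rfl fun i _ => Finset.sum_congr rfl fun i' _ =>
        (Finset.sum_mul_sum _ _ _ _).symm
    rw [e2]
    calc 1 / (b:ℝ) ^ 2 * ∑ i : Fin b, ∑ i' : Fin b,
          (∑ j, |μ i j| * |μ i' j|) * (∑ k, |μ i k| * |μ i' k|)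
        ≤ 1 / (b:ℝ) ^ 2 * ((∑ i, ∑ j, μ i j ^ 2) * (∑ i, ∑ j, μ i j ^ 2)) := by
          have := BRHT_cross_bound μ
          have hbp : (0:ℝ) ≤ 1 / (b:ℝ) ^ 2 := by positivity
          nlinarith
      _ = ρ ^ 4 / b ^ 2 := by rw [← hρ]; ring
  calc (∑ p : (Fin L × Fin L × Fin b × Fin b × Fin b × Fin b), C p * (if (∀ x, Even (({p.2.2.1, p.2.2.2.1, p.2.2.2.2.1, p.2.2.2.2.2} :
        Multiset (Fin b)).count x)) then (1:ℝ) else 0))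
      ≤ ∑ p : (Fin L × Fin L × Fin b × Fin b × Fin b × Fin b), (|C p| * E₁ p + |C p| * E₂ p + |C p| * E₃ p) :=
        Finset.sum_le_sum fun p _ => hterm p
    _ = (∑ p : (Fin L × Fin L × Fin b × Fin b × Fin b × Fin b), |C p| * E₁ p) + (∑ p : (Fin L × Fin L × Fin b × Fin b × Fin b × Fin b), |C p| * E₂ p) + (∑ p : (Fin L × Fin L × Fin b × Fin b × Fin b × Fin b), |C p| * E₃ p) := by
        rw [Finset.sum_add_distrib, Finset.sum_add_distrib]
    _ ≤ ρ ^ 4 / b ^ 2 + ρ ^ 4 / b ^ 2 + ρ ^ 4 / b ^ 2 := by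
        exact add_le_add (add_le_add hT1 hT2) hT3
    _ = 3 * ρ ^ 4 / b ^ 2 := by ring
end

section
/- (d,L)-compression: let R = H_d D be a (d,L)-BRHT with b = d/L blocks using 4-wise independent Rademacher signs. Then for every μ ∈ ℝ^d and every integer t with 1 ≤ t ≤ b, Pr[‖(Rμ)_{[1:tL]}‖² ≥ (1/100)·(tL/d)·‖μ‖²] ≥ 8/25, where (v)_{[1:m]} denotes the vector of the first m coordinates of v. -/
open MeasureTheory
open scoped Matrix


open MeasureTheory

/-- The normalized Sylvester Hadamard matrix `H_{2^k}`, defined recursively by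
`H_1 = [1]` and `H_{2d} = (1/√2) [[H_d, H_d], [H_d, -H_d]]`. -/
noncomputable def sylvesterHadamard : (k : ℕ) → Matrix (Fin (2 ^ k)) (Fin (2 ^ k)) ℝ
  | 0 => fun _ _ => 1
  | (k + 1) =>
      Matrix.reindex (finSumFinEquiv.trans (finCongr (by ring)))
        (finSumFinEquiv.trans (finCongr (by ring)))
        ((1 / Real.sqrt 2) •
          Matrix.fromBlocks (sylvesterHadamard k) (sylvesterHadamard k)
            (sylvesterHadamard k) (-(sylvesterHadamard k)))

/-- The block index of a coordinate `i ∈ [d]`, `d = 2^k`, for blocks of length `L ∣ d`. -/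
def blockIdx (k L : ℕ) (hL : L ∣ 2 ^ k) (i : Fin (2 ^ k)) : Fin (2 ^ k / L) :=
  ⟨i.val / L, Nat.div_lt_div_of_lt_of_dvd hL i.isLt⟩


section AuxLemmas


lemma pow_pos2 (k : ℕ) : 0 < 2^k := Nat.pow_pos two_pos

lemma finsum_symm_decomp (k : ℕ) (j : Fin (2^(k+1))) :
    ((finSumFinEquiv.trans (finCongr (by ring : 2^k + 2^k = 2^(k+1)))).symm j) =
      if h : j.val < 2^k then Sum.inl ⟨j.val, h⟩
      else Sum.inr ⟨j.val - 2^k, by have := j.isLt; simp [pow_succ] at this; omega⟩ := by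
  rw [Equiv.symm_apply_eq]
  split_ifs with h
  · apply Fin.ext
    simp [finSumFinEquiv_apply_left]
  · apply Fin.ext
    simp [finSumFinEquiv_apply_right, Fin.natAdd]
    omega

lemma syl_succ (k : ℕ) (j i : Fin (2^(k+1))) :
    sylvesterHadamard (k+1) j i =
      (1 / Real.sqrt 2) * (if 2^k ≤ j.val ∧ 2^k ≤ i.val then -1 else 1) *
        sylvesterHadamard k ⟨j.val % 2^k, Nat.mod_lt _ (pow_pos2 k)⟩
          ⟨i.val % 2^k, Nat.mod_lt _ (pow_pos2 k)⟩ := by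
  show (Matrix.reindex (finSumFinEquiv.trans (finCongr (by ring)))
        (finSumFinEquiv.trans (finCongr (by ring)))
        ((1 / Real.sqrt 2) •
          Matrix.fromBlocks (sylvesterHadamard k) (sylvesterHadamard k)
            (sylvesterHadamard k) (-(sylvesterHadamard k)))) j i = _
  rw [Matrix.reindex_apply, Matrix.submatrix_apply, finsum_symm_decomp, finsum_symm_decomp]
  have hj : (j:ℕ) < 2^k * 2 := lt_of_lt_of_eq j.isLt (pow_succ 2 k)
  have hi : (i:ℕ) < 2^k * 2 := lt_of_lt_of_eq i.isLt (pow_succ 2 k)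
  rcases Nat.lt_or_ge j.val (2^k) with hj1 | hj1 <;>
    rcases Nat.lt_or_ge i.val (2^k) with hi1 | hi1
  · rw [dif_pos hj1, dif_pos hi1, if_neg (by omega)]
    have ej : (j:ℕ) % 2^k = (j:ℕ) := Nat.mod_eq_of_lt hj1
    have ei : (i:ℕ) % 2^k = (i:ℕ) := Nat.mod_eq_of_lt hi1
    simp only [ej, ei, Matrix.smul_apply, Matrix.fromBlocks_apply₁₁, smul_eq_mul]
    ring
  · rw [dif_pos hj1, dif_neg (by omega), if_neg (by omega)]
    have ej : (j:ℕ) % 2^k = (j:ℕ) := Nat.mod_eq_of_lt hj1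
    have ei : (i:ℕ) % 2^k = (i:ℕ) - 2^k := by
      rw [Nat.mod_eq_sub_mod hi1]; exact Nat.mod_eq_of_lt (by omega)
    simp only [ej, ei, Matrix.smul_apply, Matrix.fromBlocks_apply₁₂, smul_eq_mul]
    ring
  · rw [dif_neg (by omega), dif_pos hi1, if_neg (by omega)]
    have ej : (j:ℕ) % 2^k = (j:ℕ) - 2^k := by
      rw [Nat.mod_eq_sub_mod hj1]; exact Nat.mod_eq_of_lt (by omega)
    have ei : (i:ℕ) % 2^k = (i:ℕ) := Nat.mod_eq_of_lt hi1
    simp only [ej, ei, Matrix.smul_apply, Matrix.fromBlocks_apply₂₁, smul_eq_mul]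
    ring
  · rw [dif_neg (by omega), dif_neg (by omega), if_pos ⟨hj1, hi1⟩]
    have ej : (j:ℕ) % 2^k = (j:ℕ) - 2^k := by
      rw [Nat.mod_eq_sub_mod hj1]; exact Nat.mod_eq_of_lt (by omega)
    have ei : (i:ℕ) % 2^k = (i:ℕ) - 2^k := by
      rw [Nat.mod_eq_sub_mod hi1]; exact Nat.mod_eq_of_lt (by omega)
    simp only [ej, ei, Matrix.smul_apply, Matrix.fromBlocks_apply₂₂, Matrix.neg_apply,
      smul_eq_mul]
    ring

lemma syl_sq (k : ℕ) (j i : Fin (2^k)) :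
    (sylvesterHadamard k j i)^2 = ((2:ℝ)^k)⁻¹ := by
  induction k with
  | zero => simp [sylvesterHadamard]
  | succ k ih =>
    rw [syl_succ, mul_pow, mul_pow, ih]
    have h2 : Real.sqrt 2 ^ 2 = 2 := Real.sq_sqrt (by norm_num)
    have h3 : ((Real.sqrt 2)⁻¹)^2 = (2:ℝ)⁻¹ := by rw [inv_pow, h2]
    split_ifs <;>
      simp [h3, pow_succ, neg_pow, mul_inv] <;> ring

lemma syl_ortho_mat (k : ℕ) :
    (sylvesterHadamard k)ᵀ * (sylvesterHadamard k) = 1 := by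
  induction k with
  | zero =>
    ext i j
    have : i = j := by
      apply Fin.ext
      have h1 : (i:ℕ) < 1 := i.isLt
      have h2 : (j:ℕ) < 1 := j.isLt
      omega
    subst this
    rw [Matrix.mul_apply]
    simp [sylvesterHadamard, Matrix.mul_apply, Matrix.one_apply, Matrix.transpose_apply]
    rfl
  | succ k ih =>
    have hdef : sylvesterHadamard (k+1) = Matrix.reindex
        (finSumFinEquiv.trans (finCongr (by ring)))
        (finSumFinEquiv.trans (finCongr (by ring)))
        ((1 / Real.sqrt 2) •
          Matrix.fromBlocks (sylvesterHadamard k) (sylvesterHadamard k)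
            (sylvesterHadamard k) (-(sylvesterHadamard k))) := rfl
    rw [hdef, Matrix.reindex_apply, Matrix.transpose_submatrix, Matrix.submatrix_mul_equiv]
    have hs : (1 / Real.sqrt 2) * (1 / Real.sqrt 2) = 1/2 := by
      rw [div_mul_div_comm, one_mul, Real.mul_self_sqrt (by norm_num)]
    have key : (((1 / Real.sqrt 2) •
          Matrix.fromBlocks (sylvesterHadamard k) (sylvesterHadamard k)
            (sylvesterHadamard k) (-(sylvesterHadamard k)))ᵀ *
        ((1 / Real.sqrt 2) •
          Matrix.fromBlocks (sylvesterHadamard k) (sylvesterHadamard k)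
            (sylvesterHadamard k) (-(sylvesterHadamard k)))) = 1 := by
      rw [Matrix.transpose_smul, Matrix.smul_mul, Matrix.mul_smul,
        Matrix.fromBlocks_transpose, Matrix.fromBlocks_multiply, smul_smul, hs]
      simp only [Matrix.transpose_neg, Matrix.mul_neg, Matrix.neg_mul, ih, neg_neg,
        add_neg_cancel]
      ext x y
      rcases x with x | x <;> rcases y with y | y <;>
        simp [Matrix.one_apply, Matrix.smul_apply] <;>
      · split_ifs <;> norm_num
    rw [key, Matrix.submatrix_one_equiv]

lemma syl_ortho (k : ℕ) (i i' : Fin (2^k)) :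
    ∑ j, sylvesterHadamard k j i * sylvesterHadamard k j i' =
      if i = i' then 1 else 0 := by
  have := congrFun (congrFun (syl_ortho_mat k) i) i'
  rw [Matrix.mul_apply, Matrix.one_apply] at this
  simpa [Matrix.transpose_apply] using this

lemma syl_tensor (c : ℕ) : ∀ m : ℕ, ∀ (j i : ℕ) (hj : j < 2^(c+m)) (hi : i < 2^(c+m)),
    sylvesterHadamard (c+m) ⟨j, hj⟩ ⟨i, hi⟩ =
      sylvesterHadamard m ⟨j / 2^c, Nat.div_lt_of_lt_mul (by rw [← pow_add]; omega)⟩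
          ⟨i / 2^c, Nat.div_lt_of_lt_mul (by rw [← pow_add]; omega)⟩ *
        sylvesterHadamard c ⟨j % 2^c, Nat.mod_lt _ (pow_pos2 c)⟩
          ⟨i % 2^c, Nat.mod_lt _ (pow_pos2 c)⟩ := by
  intro m
  induction m with
  | zero =>
    intro j i hj hi
    have hj' : j < 2^c := by simpa using hj
    have hi' : i < 2^c := by simpa using hi
    have e1 : j / 2^c = 0 := Nat.div_eq_of_lt hj'
    have e2 : i / 2^c = 0 := Nat.div_eq_of_lt hi'
    have e3 : j % 2^c = j := Nat.mod_eq_of_lt hj'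
    have e4 : i % 2^c = i := Nat.mod_eq_of_lt hi'
    simp only [e1, e2, e3, e4]
    rw [show sylvesterHadamard 0 = fun _ _ => (1:ℝ) from rfl]
    simp
  | succ m ih =>
    intro j i hj hi
    have hca : c + (m+1) = (c+m) + 1 := by omega
    have hj2 : j < 2^((c+m)+1) := by rwa [← hca]
    have hi2 : i < 2^((c+m)+1) := by rwa [← hca]
    have hstep : sylvesterHadamard (c+(m+1)) ⟨j, hj⟩ ⟨i, hi⟩
        = sylvesterHadamard ((c+m)+1) ⟨j, hj2⟩ ⟨i, hi2⟩ := rfl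
    rw [hstep, syl_succ, ih (j % 2^(c+m)) (i % 2^(c+m)) (Nat.mod_lt _ (pow_pos2 _)) (Nat.mod_lt _ (pow_pos2 _)), syl_succ]
    have hd : (2:ℕ)^(c+m) = 2^c * 2^m := by rw [pow_add]
    have a1 : j % 2^(c+m) / 2^c = j / 2^c % 2^m := by rw [hd, Nat.mod_mul_right_div_self]
    have b1 : i % 2^(c+m) / 2^c = i / 2^c % 2^m := by rw [hd, Nat.mod_mul_right_div_self]
    have a2 : j % 2^(c+m) % 2^c = j % 2^c := Nat.mod_mod_of_dvd j ⟨2^m, hd⟩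
    have b2 : i % 2^(c+m) % 2^c = i % 2^c := Nat.mod_mod_of_dvd i ⟨2^m, hd⟩
    have sj : (2^(c+m) ≤ j) = (2^m ≤ j / 2^c) := by
      rw [eq_iff_iff, Nat.le_div_iff_mul_le (pow_pos2 c), ← pow_add, add_comm m c]
    have si : (2^(c+m) ≤ i) = (2^m ≤ i / 2^c) := by
      rw [eq_iff_iff, Nat.le_div_iff_mul_le (pow_pos2 c), ← pow_add, add_comm m c]
    simp only [a1, b1, a2, b2, sj, si]
    ring

lemma syl_tensor' (c m : ℕ) (j i : Fin (2^(c+m))) :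
    sylvesterHadamard (c+m) j i =
      sylvesterHadamard m ⟨j.val / 2^c, Nat.div_lt_of_lt_mul (by rw [← pow_add]; exact j.isLt)⟩
          ⟨i.val / 2^c, Nat.div_lt_of_lt_mul (by rw [← pow_add]; exact i.isLt)⟩ *
        sylvesterHadamard c ⟨j.val % 2^c, Nat.mod_lt _ (pow_pos2 c)⟩
          ⟨i.val % 2^c, Nat.mod_lt _ (pow_pos2 c)⟩ := by
  have := syl_tensor c m j.val i.val j.isLt i.isLt
  simpa using this

lemma card_filter_lt_fin (N t : ℕ) (ht : t ≤ N) :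
    (Finset.univ.filter (fun q : Fin N => (q:ℕ) < t)).card = t := by
  have : Finset.univ.filter (fun q : Fin N => (q:ℕ) < t) =
      Finset.map (Fin.castLEEmb ht) Finset.univ := by
    ext x
    simp only [Finset.mem_filter, Finset.mem_univ, true_and, Finset.mem_map,
      Fin.castLEEmb_apply]
    constructor
    · intro hx
      exact ⟨⟨x.val, hx⟩, Fin.ext rfl⟩
    · rintro ⟨y, rfl⟩
      exact y.isLt
  rw [this, Finset.card_map, Finset.card_univ, Fintype.card_fin]

lemma syl_key (c m t : ℕ) (ht : t ≤ 2^m) (i i' : Fin (2^(c+m)))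
    (hblk : i.val / 2^c = i'.val / 2^c) :
    ∑ j ∈ Finset.univ.filter (fun j : Fin (2^(c+m)) => (j:ℕ) < t * 2^c),
      sylvesterHadamard (c+m) j i * sylvesterHadamard (c+m) j i' =
    if i = i' then (t * 2^c : ℝ) / 2^(c+m) else 0 := by
  have hcm : (2:ℕ)^(c+m) = 2^c * 2^m := by rw [pow_add]
  set s : Fin (2^c) := ⟨i.val % 2^c, Nat.mod_lt _ (pow_pos2 c)⟩ with hs
  set s' : Fin (2^c) := ⟨i'.val % 2^c, Nat.mod_lt _ (pow_pos2 c)⟩ with hs'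
  have step1 : ∑ j ∈ Finset.univ.filter (fun j : Fin (2^(c+m)) => (j:ℕ) < t * 2^c),
      sylvesterHadamard (c+m) j i * sylvesterHadamard (c+m) j i' =
      ∑ p ∈ (Finset.univ.filter (fun q : Fin (2^m) => (q:ℕ) < t)) ×ˢ
          (Finset.univ : Finset (Fin (2^c))),
        ((2:ℝ)^m)⁻¹ * (sylvesterHadamard c p.2 s * sylvesterHadamard c p.2 s') := by
    apply Finset.sum_nbij' (i := fun j : Fin (2^(c+m)) =>
        ((⟨j.val / 2^c, Nat.div_lt_of_lt_mul (by rw [← pow_add]; exact j.isLt)⟩ : Fin (2^m)),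
         (⟨j.val % 2^c, Nat.mod_lt _ (pow_pos2 c)⟩ : Fin (2^c))))
      (j := fun p : Fin (2^m) × Fin (2^c) =>
        (⟨p.1.val * 2^c + p.2.val, by
          have h1 := p.1.isLt
          have h2 := p.2.isLt
          calc p.1.val * 2^c + p.2.val < (p.1.val + 1) * 2^c := by ring_nf; omega
          _ ≤ 2^m * 2^c := Nat.mul_le_mul_right _ h1
          _ = 2^(c+m) := by rw [← pow_add, add_comm]⟩ : Fin (2^(c+m))))
    · intro a ha
      simp only [Finset.mem_filter, Finset.mem_univ, true_and] at ha ⊢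
      rw [Finset.mem_product]
      refine ⟨?_, Finset.mem_univ _⟩
      simp only [Finset.mem_filter, Finset.mem_univ, true_and]
      exact Nat.div_lt_of_lt_mul (by rw [mul_comm]; exact ha)
    · intro p hp
      rw [Finset.mem_product] at hp
      obtain ⟨hp1, -⟩ := hp
      simp only [Finset.mem_filter, Finset.mem_univ, true_and] at hp1 ⊢
      have h2 := p.2.isLt
      calc p.1.val * 2^c + p.2.val < (p.1.val + 1) * 2^c := by ring_nf; omega
      _ ≤ t * 2^c := Nat.mul_le_mul_right _ hp1
    · intro a _
      apply Fin.ext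
      simp only
      exact Nat.div_add_mod' a.val (2^c)
    · intro p hp
      have h2 := p.2.isLt
      have e1 : (p.1.val * 2^c + p.2.val) / 2^c = p.1.val := by
        rw [add_comm, Nat.add_mul_div_right _ _ (pow_pos2 c), Nat.div_eq_of_lt h2, zero_add]
      have e2 : (p.1.val * 2^c + p.2.val) % 2^c = p.2.val := by
        rw [add_comm, Nat.add_mul_mod_self_right]
        exact Nat.mod_eq_of_lt h2
      ext <;> simp [e1, e2]
    · intro a ha
      rw [syl_tensor' c m a i, syl_tensor' c m a i']
      have hb : (⟨i.val / 2^c, Nat.div_lt_of_lt_mul (by rw [← pow_add]; exact i.isLt)⟩ :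
          Fin (2^m)) = ⟨i'.val / 2^c, Nat.div_lt_of_lt_mul (by rw [← pow_add]; exact i'.isLt)⟩ :=
        Fin.ext hblk
      rw [hb]
      have hsq := syl_sq m (⟨a.val / 2^c, Nat.div_lt_of_lt_mul (by rw [← pow_add]; exact a.isLt)⟩ :
          Fin (2^m)) (⟨i'.val / 2^c, Nat.div_lt_of_lt_mul (by rw [← pow_add]; exact i'.isLt)⟩)
      simp only [hs, hs']
      rw [← hsq]
      ring
  rw [step1, Finset.sum_product]
  have inner : ∑ r : Fin (2^c),
      ((2:ℝ)^m)⁻¹ * (sylvesterHadamard c r s * sylvesterHadamard c r s') =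
      ((2:ℝ)^m)⁻¹ * (if s = s' then 1 else 0) := by
    rw [← Finset.mul_sum, syl_ortho]
  simp only [inner]
  rw [Finset.sum_const, card_filter_lt_fin _ _ ht]
  have hval : (i = i') ↔ (s = s') := by
    constructor
    · rintro rfl; rfl
    · intro hss
      apply Fin.ext
      have h1 : i.val % 2^c = i'.val % 2^c := by
        have := congrArg Fin.val hss
        simpa [hs, hs'] using this
      rw [← Nat.div_add_mod i.val (2^c), ← Nat.div_add_mod i'.val (2^c), hblk, h1]
  rcases eq_or_ne i i' with h | h
  · rw [if_pos h, if_pos (hval.1 h), nsmul_eq_mul,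
      show ((2:ℝ)^(c+m)) = 2^c * 2^m from by rw [pow_add]]
    have h1 : (0:ℝ) < 2^c := by positivity
    have h2 : (0:ℝ) < 2^m := by positivity
    field_simp
  · rw [if_neg h, if_neg (fun hss => h (hval.2 hss))]
    simp


lemma multiset_even_iff {α : Type*} [DecidableEq α] (a b c d : α) :
    (∀ x, Even (({a, b, c, d} : Multiset α).count x)) ↔
      (a = b ∧ c = d) ∨ (a = c ∧ b = d) ∨ (a = d ∧ b = c) := by
  constructor
  · intro h
    have ha := h a
    have hb := h b
    have hc := h c
    have hd := h d
    simp only [Multiset.insert_eq_cons, Multiset.count_cons, Multiset.count_singleton] at ha hb hc hd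
    rcases eq_or_ne a b with h1 | h1 <;> rcases eq_or_ne a c with h2 | h2 <;>
      rcases eq_or_ne a d with h3 | h3 <;> rcases eq_or_ne b c with h4 | h4 <;>
      rcases eq_or_ne b d with h5 | h5 <;> rcases eq_or_ne c d with h6 | h6 <;>
      simp_all [Nat.even_iff] <;> omega
  · intro h x
    simp only [Multiset.insert_eq_cons, Multiset.count_cons, Multiset.count_singleton]
    rcases h with ⟨h1, h2⟩ | ⟨h1, h2⟩ | ⟨h1, h2⟩ <;> subst h1 <;> subst h2 <;>
      split_ifs <;> simp_all [Nat.even_iff] <;> omega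


lemma ite_pairing {α : Type*} [DecidableEq α] (a b c d : α) :
    (if (a=b∧c=d)∨(a=c∧b=d)∨(a=d∧b=c) then (1:ℝ) else 0) =
    (if a=b∧c=d then (1:ℝ) else 0) + (if a=c∧b=d then (1:ℝ) else 0) +
      (if a=d∧b=c then (1:ℝ) else 0) - 2 * (if a=b∧a=c∧a=d then (1:ℝ) else 0) := by
  by_cases h1 : a = b <;> by_cases h2 : a = c <;> by_cases h3 : a = d <;>
    by_cases h4 : b = c <;> by_cases h5 : b = d <;> by_cases h6 : c = d <;>
    simp_all <;> norm_num

end AuxLemmas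

set_option maxHeartbeats 1000000 in
/-- `(d, L)`-compression: let `R = H_d D` be a `(d, L)`-BRHT with `b = d/L` blocks, the
`i`-th diagonal block of `D` being `δ_i · I_L` for 4-wise independent Rademacher signs
`δ_1, …, δ_b`. Then for every `μ ∈ ℝ^d` and every `1 ≤ t ≤ b`,
`Pr[ ‖(Rμ)_{[1:tL]}‖² ≥ (1/100)·(tL/d)·‖μ‖² ] ≥ 8/25`. -/
theorem BRHT_compression {Ω : Type*} [MeasurableSpace Ω] (P : Measure Ω)
    [IsProbabilityMeasure P] (k L : ℕ) (hL : L ∣ 2 ^ k)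
    (δ : Fin (2 ^ k / L) → Ω → ℝ) (hmeas : ∀ i, Measurable (δ i))
    (hsign : ∀ i ω, δ i ω = 1 ∨ δ i ω = -1)
    (h4wise : ∀ i₁ i₂ i₃ i₄ : Fin (2 ^ k / L),
      ∫ ω, δ i₁ ω * δ i₂ ω * δ i₃ ω * δ i₄ ω ∂P =
        if ∀ x, Even (({i₁, i₂, i₃, i₄} : Multiset (Fin (2 ^ k / L))).count x)
        then 1 else 0)
    (μ : Fin (2 ^ k) → ℝ) (t : ℕ) (ht₁ : 1 ≤ t) (ht₂ : t ≤ 2 ^ k / L) :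
    (8 / 25 : ENNReal) ≤
      P {ω | (1 / 100 : ℝ) * ((t * L : ℝ) / 2 ^ k) * (∑ i, μ i ^ 2) ≤
        ∑ j ∈ Finset.univ.filter (fun j : Fin (2 ^ k) => (j : ℕ) < t * L),
          (∑ i, sylvesterHadamard k j i * δ (blockIdx k L hL i) ω * μ i) ^ 2} := by
  classical
  obtain ⟨c, hck, rfl⟩ := (Nat.dvd_prime_pow Nat.prime_two).mp hL
  obtain ⟨m, rfl⟩ : ∃ m, k = c + m := ⟨k - c, by omega⟩
  have hBm : 2^(c+m) / 2^c = 2^m := by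
    rw [Nat.pow_div (by omega) (by norm_num)]
    congr 1
    omega
  have htm : t ≤ 2^m := by rwa [hBm] at ht₂
  set J := Finset.univ.filter (fun j : Fin (2^(c+m)) => (j:ℕ) < t * 2^c) with hJ
  set blk := blockIdx (c+m) (2^c) hL with hblk
  set g : Fin (2^(c+m)/2^c) → Fin (2^(c+m)) → ℝ := fun β j =>
    ∑ i ∈ Finset.univ.filter (fun i => blk i = β), sylvesterHadamard (c+m) j i * μ i with hg
  set A : Fin (2^(c+m)/2^c) → Fin (2^(c+m)/2^c) → ℝ := fun β γ =>
    ∑ j ∈ J, g β j * g γ j with hA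
  set S := ∑ β, A β β with hSdef
  set X : Ω → ℝ := fun ω => ∑ j ∈ J,
    (∑ i, sylvesterHadamard (c+m) j i * δ (blk i) ω * μ i)^2 with hX
  -- decomposition of X
  have hXrw : ∀ ω, X ω = ∑ p : Fin (2^(c+m)/2^c) × Fin (2^(c+m)/2^c),
      (δ p.1 ω * δ p.2 ω) * A p.1 p.2 := by
    intro ω
    have inner : ∀ j, (∑ i, sylvesterHadamard (c+m) j i * δ (blk i) ω * μ i) =
        ∑ β, δ β ω * g β j := by
      intro j
      rw [← Finset.sum_fiberwise Finset.univ (fun i => blk i)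
        (fun i => sylvesterHadamard (c+m) j i * δ (blk i) ω * μ i)]
      apply Finset.sum_congr rfl
      intro β _
      rw [hg]
      simp only
      rw [Finset.mul_sum]
      apply Finset.sum_congr rfl
      intro i hi
      rw [Finset.mem_filter] at hi
      rw [hi.2]
      ring
    calc X ω = ∑ j ∈ J, (∑ β, δ β ω * g β j) * (∑ γ, δ γ ω * g γ j) := by
          apply Finset.sum_congr rfl
          intro j _
          rw [inner, sq]
    _ = ∑ j ∈ J, ∑ p : Fin (2^(c+m)/2^c) × Fin (2^(c+m)/2^c),
          (δ p.1 ω * g p.1 j) * (δ p.2 ω * g p.2 j) := by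
          apply Finset.sum_congr rfl
          intro j _
          rw [Finset.sum_mul_sum, ← Finset.sum_product']
          rfl
    _ = ∑ p : Fin (2^(c+m)/2^c) × Fin (2^(c+m)/2^c),
          ∑ j ∈ J, (δ p.1 ω * g p.1 j) * (δ p.2 ω * g p.2 j) := Finset.sum_comm
    _ = ∑ p : Fin (2^(c+m)/2^c) × Fin (2^(c+m)/2^c), (δ p.1 ω * δ p.2 ω) * A p.1 p.2 := by
          apply Finset.sum_congr rfl
          intro p _
          rw [hA]
          simp only
          rw [Finset.mul_sum]
          apply Finset.sum_congr rfl
          intro j _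
          ring

  -- basic facts about A
  have hApos : ∀ β, 0 ≤ A β β := by
    intro β
    apply Finset.sum_nonneg
    intro j _
    exact mul_self_nonneg _
  have hAsymm : ∀ β γ, A β γ = A γ β := by
    intro β γ
    apply Finset.sum_congr rfl
    intro j _
    ring
  have hCS : ∀ β γ, (A β γ)^2 ≤ A β β * A γ γ := by
    intro β γ
    have h := Finset.sum_mul_sq_le_sq_mul_sq J (g β) (g γ)
    calc (A β γ)^2 = (∑ j ∈ J, g β j * g γ j)^2 := rfl
    _ ≤ (∑ j ∈ J, (g β j)^2) * (∑ j ∈ J, (g γ j)^2) := h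
    _ = A β β * A γ γ := by
        rw [hA]
        simp only [sq]
  have hSpos : 0 ≤ S := Finset.sum_nonneg fun β _ => hApos β
  -- value of S
  have hSval : S = ((t : ℝ) * 2^c / 2^(c+m)) * ∑ i, μ i ^ 2 := by
    have hAval : ∀ β, A β β = ∑ i ∈ Finset.univ.filter (fun i => blk i = β),
        ((t : ℝ) * 2^c / 2^(c+m)) * μ i ^ 2 := by
      intro β
      rw [hA]
      simp only
      have e1 : ∀ j, g β j * g β j = ∑ i ∈ Finset.univ.filter (fun i => blk i = β),
          ∑ i' ∈ Finset.univ.filter (fun i => blk i = β),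
            (sylvesterHadamard (c+m) j i * μ i) * (sylvesterHadamard (c+m) j i' * μ i') := by
        intro j
        rw [hg]
        simp only
        rw [Finset.sum_mul_sum]
      rw [Finset.sum_congr rfl (fun j _ => e1 j), Finset.sum_comm]
      apply Finset.sum_congr rfl
      intro i hi
      rw [Finset.sum_comm]
      have hkey : ∀ i' ∈ Finset.univ.filter (fun i => blk i = β),
          (∑ j ∈ J, (sylvesterHadamard (c+m) j i * μ i) *
            (sylvesterHadamard (c+m) j i' * μ i')) =
          μ i * μ i' * (if i = i' then ((t : ℝ) * 2^c / 2^(c+m)) else 0) := by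
        intro i' hi'
        have hb : i.val / 2^c = i'.val / 2^c := by
          rw [Finset.mem_filter] at hi hi'
          have := congrArg Fin.val (hi.2.trans hi'.2.symm)
          simpa [hblk, blockIdx] using this
        rw [← syl_key c m t htm i i' hb, hJ, Finset.mul_sum]
        apply Finset.sum_congr rfl
        intro j _
        ring
      rw [Finset.sum_congr rfl hkey]
      have e3 : ∀ i' ∈ Finset.univ.filter (fun i => blk i = β),
          μ i * μ i' * (if i = i' then ((t : ℝ) * 2^c / 2^(c+m)) else 0) =
          if i = i' then ((t : ℝ) * 2^c / 2^(c+m)) * μ i' ^ 2 else 0 := by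
        intro i' _
        split_ifs with h
        · subst h; ring
        · ring
      rw [Finset.sum_congr rfl e3, Finset.sum_ite_eq, if_pos hi]
    rw [hSdef, Finset.sum_congr rfl (fun β _ => hAval β),
      Finset.sum_fiberwise Finset.univ (fun i => blk i)
        (fun i => ((t : ℝ) * 2^c / 2^(c+m)) * μ i ^ 2), ← Finset.mul_sum]

  -- moments
  have habs : ∀ e ω, |δ e ω| = 1 := by
    intro e ω
    rcases hsign e ω with h | h <;> simp [h]
  have hint4 : ∀ a b e f, Integrable (fun ω => δ a ω * δ b ω * δ e ω * δ f ω) P := by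
    intro a b e f
    apply Integrable.mono' (integrable_const (1:ℝ))
    · exact ((((hmeas a).mul (hmeas b)).mul (hmeas e)).mul (hmeas f)).aestronglyMeasurable
    · filter_upwards with ω
      rw [Real.norm_eq_abs, abs_mul, abs_mul, abs_mul, habs, habs, habs, habs]
      norm_num
  have hint2 : ∀ a b, Integrable (fun ω => δ a ω * δ b ω) P := by
    intro a b
    apply Integrable.mono' (integrable_const (1:ℝ))
    · exact ((hmeas a).mul (hmeas b)).aestronglyMeasurable
    · filter_upwards with ω
      rw [Real.norm_eq_abs, abs_mul, habs, habs]
      norm_num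
  have hd2 : ∀ a b, ∫ ω, δ a ω * δ b ω ∂P = if a = b then 1 else 0 := by
    intro a b
    have e1 : ∀ ω, δ a ω * δ b ω = δ a ω * δ b ω * δ b ω * δ b ω := by
      intro ω
      rcases hsign b ω with h | h <;> rw [h] <;> ring
    rw [show (fun ω => δ a ω * δ b ω) = fun ω => δ a ω * δ b ω * δ b ω * δ b ω from funext e1,
      h4wise a b b b]
    have : (∀ x, Even (({a, b, b, b} : Multiset (Fin (2^(c+m)/2^c))).count x)) ↔ a = b := by
      rw [multiset_even_iff]
      tauto
    rw [if_congr this rfl rfl]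
  have hd4 : ∀ a b e f, ∫ ω, δ a ω * δ b ω * δ e ω * δ f ω ∂P =
      if (a=b∧e=f)∨(a=e∧b=f)∨(a=f∧b=e) then (1:ℝ) else 0 := by
    intro a b e f
    rw [h4wise, if_congr (multiset_even_iff a b e f) rfl rfl]
  have hXmeas : Measurable X := by
    apply Finset.measurable_sum
    intro j _
    apply Measurable.pow_const
    apply Finset.measurable_sum
    intro i _
    exact ((hmeas (blk i)).const_mul _).mul_const _
  have hXint : Integrable X P := by
    rw [show X = fun ω => ∑ p : Fin (2^(c+m)/2^c) × Fin (2^(c+m)/2^c),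
        (δ p.1 ω * δ p.2 ω) * A p.1 p.2 from funext hXrw]
    apply integrable_finset_sum
    intro p _
    exact (hint2 p.1 p.2).mul_const _
  have hX2rw : ∀ ω, (X ω)^2 = ∑ p : Fin (2^(c+m)/2^c) × Fin (2^(c+m)/2^c),
      ∑ q : Fin (2^(c+m)/2^c) × Fin (2^(c+m)/2^c),
      (δ p.1 ω * δ p.2 ω * δ q.1 ω * δ q.2 ω) * (A p.1 p.2 * A q.1 q.2) := by
    intro ω
    rw [hXrw, sq, Finset.sum_mul_sum]
    apply Finset.sum_congr rfl
    intro p _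
    apply Finset.sum_congr rfl
    intro q _
    ring
  have hX2int : Integrable (fun ω => (X ω)^2) P := by
    rw [show (fun ω => (X ω)^2) = fun ω => ∑ p : Fin (2^(c+m)/2^c) × Fin (2^(c+m)/2^c),
        ∑ q : Fin (2^(c+m)/2^c) × Fin (2^(c+m)/2^c),
        (δ p.1 ω * δ p.2 ω * δ q.1 ω * δ q.2 ω) * (A p.1 p.2 * A q.1 q.2) from funext hX2rw]
    apply integrable_finset_sum
    intro p _
    apply integrable_finset_sum
    intro q _
    exact (hint4 p.1 p.2 q.1 q.2).mul_const _
  have hdiagsum : ∑ p : Fin (2^(c+m)/2^c) × Fin (2^(c+m)/2^c),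
      (if p.1 = p.2 then (1:ℝ) else 0) * A p.1 p.2 = S := by
    rw [Fintype.sum_prod_type]
    rw [hSdef]
    apply Finset.sum_congr rfl
    intro β _
    simp only [ite_mul, one_mul, zero_mul]
    rw [Finset.sum_ite_eq, if_pos (Finset.mem_univ β)]
  have hEX : ∫ ω, X ω ∂P = S := by
    rw [show X = fun ω => ∑ p : Fin (2^(c+m)/2^c) × Fin (2^(c+m)/2^c),
        (δ p.1 ω * δ p.2 ω) * A p.1 p.2 from funext hXrw]
    rw [integral_finset_sum _ (fun p _ => (hint2 p.1 p.2).mul_const _)]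
    have e1 : ∀ p : Fin (2^(c+m)/2^c) × Fin (2^(c+m)/2^c),
        ∫ ω, (δ p.1 ω * δ p.2 ω) * A p.1 p.2 ∂P =
        (if p.1 = p.2 then (1:ℝ) else 0) * A p.1 p.2 := by
      intro p
      rw [integral_mul_const, hd2]
    rw [Finset.sum_congr rfl (fun p _ => e1 p), hdiagsum]
  have hEX2 : ∫ ω, (X ω)^2 ∂P ≤ 3 * S^2 := by
    rw [show (fun ω => (X ω)^2) = fun ω => ∑ p : Fin (2^(c+m)/2^c) × Fin (2^(c+m)/2^c),
        ∑ q : Fin (2^(c+m)/2^c) × Fin (2^(c+m)/2^c),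
        (δ p.1 ω * δ p.2 ω * δ q.1 ω * δ q.2 ω) * (A p.1 p.2 * A q.1 q.2) from funext hX2rw]
    rw [integral_finset_sum _ (fun p _ =>
      integrable_finset_sum _ (fun q _ => (hint4 p.1 p.2 q.1 q.2).mul_const _))]
    have e1 : ∀ p : Fin (2^(c+m)/2^c) × Fin (2^(c+m)/2^c),
        ∫ ω, (∑ q : Fin (2^(c+m)/2^c) × Fin (2^(c+m)/2^c),
          (δ p.1 ω * δ p.2 ω * δ q.1 ω * δ q.2 ω) * (A p.1 p.2 * A q.1 q.2)) ∂P =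
        ∑ q : Fin (2^(c+m)/2^c) × Fin (2^(c+m)/2^c),
          (if (p.1=p.2∧q.1=q.2)∨(p.1=q.1∧p.2=q.2)∨(p.1=q.2∧p.2=q.1) then (1:ℝ) else 0) *
            (A p.1 p.2 * A q.1 q.2) := by
      intro p
      rw [integral_finset_sum _ (fun q _ => (hint4 p.1 p.2 q.1 q.2).mul_const _)]
      apply Finset.sum_congr rfl
      intro q _
      rw [integral_mul_const, hd4]
    rw [Finset.sum_congr rfl (fun p _ => e1 p)]
    have e2 : ∀ (p q : Fin (2^(c+m)/2^c) × Fin (2^(c+m)/2^c)),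
        (if (p.1=p.2∧q.1=q.2)∨(p.1=q.1∧p.2=q.2)∨(p.1=q.2∧p.2=q.1) then (1:ℝ) else 0) *
          (A p.1 p.2 * A q.1 q.2) =
        ((if p.1=p.2 then (1:ℝ) else 0) * A p.1 p.2) *
            ((if q.1=q.2 then (1:ℝ) else 0) * A q.1 q.2)
          + (if p=q then (1:ℝ) else 0) * (A p.1 p.2 * A q.1 q.2)
          + (if q=(p.2,p.1) then (1:ℝ) else 0) * (A p.1 p.2 * A q.1 q.2)
          - 2*((if p.1=p.2∧p.1=q.1∧p.1=q.2 then (1:ℝ) else 0) * (A p.1 p.2 * A q.1 q.2)) := by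
      intro p q
      rw [ite_pairing p.1 p.2 q.1 q.2]
      have h2 : (p.1=q.1∧p.2=q.2) = (p = q) :=
        propext ⟨fun h => Prod.ext h.1 h.2, fun h => by subst h; exact ⟨rfl, rfl⟩⟩
      have h3 : (p.1=q.2∧p.2=q.1) = (q = (p.2,p.1)) :=
        propext ⟨fun h => by apply Prod.ext <;> simp [h.2.symm, h.1.symm],
          fun h => by subst h; exact ⟨rfl, rfl⟩⟩
      have h4 : ((if p.1=p.2∧q.1=q.2 then (1:ℝ) else 0)) =
          (if p.1=p.2 then (1:ℝ) else 0) * (if q.1=q.2 then (1:ℝ) else 0) := by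
        by_cases hp : p.1 = p.2 <;> by_cases hq : q.1 = q.2 <;> simp [hp, hq]
      simp only [h2, h3, h4]
      ring
    rw [Finset.sum_congr rfl (fun p _ => Finset.sum_congr rfl (fun q _ => e2 p q))]
    have split : ∀ (f1 f2 f3 f4 : (Fin (2^(c+m)/2^c) × Fin (2^(c+m)/2^c)) →
        (Fin (2^(c+m)/2^c) × Fin (2^(c+m)/2^c)) → ℝ),
        ∑ p, ∑ q, (f1 p q + f2 p q + f3 p q - 2 * f4 p q) =
        ((∑ p, ∑ q, f1 p q) + (∑ p, ∑ q, f2 p q) + (∑ p, ∑ q, f3 p q))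
          - 2 * (∑ p, ∑ q, f4 p q) := by
      intro f1 f2 f3 f4
      simp only [Finset.sum_add_distrib, Finset.sum_sub_distrib, Finset.mul_sum]
    rw [split]
    have B1 : ∑ p : Fin (2^(c+m)/2^c) × Fin (2^(c+m)/2^c),
        ∑ q : Fin (2^(c+m)/2^c) × Fin (2^(c+m)/2^c),
        ((if p.1=p.2 then (1:ℝ) else 0) * A p.1 p.2) *
          ((if q.1=q.2 then (1:ℝ) else 0) * A q.1 q.2) = S * S := by
      rw [← Finset.sum_mul_sum, hdiagsum]
    have B2 : ∑ p : Fin (2^(c+m)/2^c) × Fin (2^(c+m)/2^c),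
        ∑ q : Fin (2^(c+m)/2^c) × Fin (2^(c+m)/2^c),
        (if p=q then (1:ℝ) else 0) * (A p.1 p.2 * A q.1 q.2) =
        ∑ p : Fin (2^(c+m)/2^c) × Fin (2^(c+m)/2^c), A p.1 p.2 * A p.1 p.2 := by
      apply Finset.sum_congr rfl
      intro p _
      simp only [ite_mul, one_mul, zero_mul]
      rw [Finset.sum_ite_eq, if_pos (Finset.mem_univ p)]
    have B3 : ∑ p : Fin (2^(c+m)/2^c) × Fin (2^(c+m)/2^c),
        ∑ q : Fin (2^(c+m)/2^c) × Fin (2^(c+m)/2^c),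
        (if q=(p.2,p.1) then (1:ℝ) else 0) * (A p.1 p.2 * A q.1 q.2) =
        ∑ p : Fin (2^(c+m)/2^c) × Fin (2^(c+m)/2^c), A p.1 p.2 * A p.1 p.2 := by
      apply Finset.sum_congr rfl
      intro p _
      simp only [ite_mul, one_mul, zero_mul]
      rw [Finset.sum_ite_eq', if_pos (Finset.mem_univ _)]
      simp only
      rw [hAsymm p.2 p.1]
    have B4 : (0:ℝ) ≤ ∑ p : Fin (2^(c+m)/2^c) × Fin (2^(c+m)/2^c),
        ∑ q : Fin (2^(c+m)/2^c) × Fin (2^(c+m)/2^c),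
        (if p.1=p.2∧p.1=q.1∧p.1=q.2 then (1:ℝ) else 0) * (A p.1 p.2 * A q.1 q.2) := by
      apply Finset.sum_nonneg
      intro p _
      apply Finset.sum_nonneg
      intro q _
      split_ifs with h
      · obtain ⟨h1, h2, h3⟩ := h
        rw [one_mul, ← h1, ← h2, ← h3]
        exact mul_self_nonneg _
      · simp
    have B5 : ∑ p : Fin (2^(c+m)/2^c) × Fin (2^(c+m)/2^c), A p.1 p.2 * A p.1 p.2 ≤ S * S := by
      have step : ∑ p : Fin (2^(c+m)/2^c) × Fin (2^(c+m)/2^c), A p.1 p.2 * A p.1 p.2 ≤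
          ∑ p : Fin (2^(c+m)/2^c) × Fin (2^(c+m)/2^c), A p.1 p.1 * A p.2 p.2 := by
        apply Finset.sum_le_sum
        intro p _
        have := hCS p.1 p.2
        nlinarith [this]
      refine step.trans (le_of_eq ?_)
      rw [Fintype.sum_prod_type, hSdef, Finset.sum_mul_sum]
    rw [B1, B2, B3]
    nlinarith [B4, B5]
  -- final argument
  have hXpos : ∀ ω, 0 ≤ X ω := by
    intro ω
    rw [hX]
    exact Finset.sum_nonneg fun j _ => sq_nonneg _
  set Eset := {ω | (1/100:ℝ)*S ≤ X ω} with hEdef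
  have hEmeas : MeasurableSet Eset := measurableSet_le measurable_const hXmeas
  have hfinal : (8/25:ENNReal) ≤ P Eset := by
    by_cases hS0 : S = 0
    · have huniv : Eset = Set.univ := by
        ext ω
        simp only [hEdef, Set.mem_setOf_eq, hS0, mul_zero, Set.mem_univ, iff_true]
        exact hXpos ω
      rw [huniv, measure_univ]
      exact ENNReal.div_le_of_le_mul (by norm_num)
    · have hSpos' : 0 < S := lt_of_le_of_ne hSpos (Ne.symm hS0)
      by_contra hcon
      have hPlt : P Eset < 8/25 := not_le.mp hcon
      set p := (P Eset).toReal with hpdef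
      have hple : p < 8/25 := by
        have h1 : ((8:ENNReal)/25).toReal = (8:ℝ)/25 := by
          rw [ENNReal.toReal_div]
          norm_num
        rw [hpdef, ← h1]
        exact (ENNReal.toReal_lt_toReal (measure_ne_top P _)
          ((ENNReal.div_lt_top (by norm_num) (by norm_num)).ne)).mpr hPlt
      have hppos : 0 ≤ p := ENNReal.toReal_nonneg
      have hlam : 0 < (49/16:ℝ)*S := by linarith
      have hne : (2*((49/16:ℝ)*S)) ≠ 0 := by linarith
      have h2lam : (0:ℝ) < 2*((49/16)*S) := by linarith
      have hpt : ∀ ω, X ω ≤ (X ω)^2/(2*((49/16)*S)) +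
          ((49/16)*S/2) * Set.indicator Eset (fun _ => (1:ℝ)) ω + (1/100)*S := by
        intro ω
        by_cases hω : ω ∈ Eset
        · rw [Set.indicator_of_mem hω]
          have h100 : 0 ≤ (1/100)*S := by linarith
          have hiden : (X ω)^2 / (2*((49/16)*S)) + ((49/16)*S)/2 - X ω =
              (X ω - (49/16)*S)^2 / (2*((49/16)*S)) := by
            field_simp
            ring
          have hnn : 0 ≤ (X ω - (49/16)*S)^2 / (2*((49/16)*S)) :=
            div_nonneg (sq_nonneg _) (le_of_lt h2lam)
          rw [← hiden] at hnn
          rw [mul_one]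
          linarith
        · rw [Set.indicator_of_notMem hω, mul_zero, add_zero]
          have hlt : X ω < (1/100)*S := by
            by_contra hge
            exact hω (by simp only [hEdef, Set.mem_setOf_eq]; linarith [not_lt.mp hge])
          have hnn : 0 ≤ (X ω)^2/(2*((49/16)*S)) := div_nonneg (sq_nonneg _) (le_of_lt h2lam)
          linarith
      have hindint : Integrable (Set.indicator Eset (fun _ => (1:ℝ))) P :=
        (integrable_const 1).indicator hEmeas
      have hRHSint : Integrable (fun ω => (X ω)^2/(2*((49/16)*S)) +
          ((49/16)*S/2) * Set.indicator Eset (fun _ => (1:ℝ)) ω + (1/100)*S) P :=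
        ((hX2int.div_const _).add (hindint.const_mul _)).add (integrable_const _)
      have hmono := integral_mono hXint hRHSint hpt
      rw [hEX] at hmono
      have hsplit : ∫ ω, ((X ω)^2/(2*((49/16)*S)) +
          ((49/16)*S/2) * Set.indicator Eset (fun _ => (1:ℝ)) ω + (1/100)*S) ∂P =
          (∫ ω, (X ω)^2 ∂P)/(2*((49/16)*S)) + ((49/16)*S/2) * p + (1/100)*S := by
        have i1 : Integrable (fun ω => (X ω)^2/(2*((49/16)*S))) P := hX2int.div_const _
        have i2 : Integrable (fun ω =>
            ((49/16)*S/2) * Set.indicator Eset (fun _ => (1:ℝ)) ω) P := hindint.const_mul _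
        have i12 : Integrable (fun ω => (X ω)^2/(2*((49/16)*S)) +
            ((49/16)*S/2) * Set.indicator Eset (fun _ => (1:ℝ)) ω) P := i1.add i2
        rw [integral_add i12 (integrable_const _), integral_add i1 i2,
          integral_div, integral_const_mul, integral_indicator_const _ hEmeas,
          integral_const]
        simp [hpdef, Measure.real]
      rw [hsplit] at hmono
      have hdivle : (∫ ω, (X ω)^2 ∂P)/(2*((49/16)*S)) ≤ (3*S^2)/(2*((49/16)*S)) := by
        exact (div_le_div_iff_of_pos_right h2lam).mpr hEX2
      have heq : (3*S^2)/(2*((49/16)*S)) = (24/49)*S := by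
        rw [div_eq_iff hne]
        ring
      have hfin2 : S ≤ (24/49)*S + ((49/16)*S/2)*p + (1/100)*S := by
        calc S ≤ (∫ ω, (X ω)^2 ∂P)/(2*((49/16)*S)) + ((49/16)*S/2)*p + (1/100)*S := hmono
        _ ≤ (3*S^2)/(2*((49/16)*S)) + ((49/16)*S/2)*p + (1/100)*S := by linarith [hdivle]
        _ = (24/49)*S + ((49/16)*S/2)*p + (1/100)*S := by rw [heq]
      have hps : ((49/16)*S/2)*p ≤ ((49/16)*S/2)*(8/25) :=
        mul_le_mul_of_nonneg_left (le_of_lt hple) (by linarith)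
      have : False := by linarith
      exact this.elim
  refine le_trans hfinal (measure_mono ?_)
  intro ω hω
  simp only [hEdef, Set.mem_setOf_eq] at hω
  simp only [Set.mem_setOf_eq]
  rw [hX] at hω
  rw [hSval] at hω
  push_cast at hω ⊢
  linarith
end

section
/- Let Z_1,…,Z_n be independent random variables with values in {−1/2, 1/2}, E[Z_k] = p_k, and suppose p_{k_1} p_{k_2} ≥ 0 for all k_1 ≠ k_2. Let T = Σ_{k_1 ≠ k_2} Z_{k_1} Z_{k_2}. Then Var(T) ≤ n(n−1)/8 + (n−2)·E[T]. -/
open MeasureTheory ProbabilityTheory Finset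

lemma sum_offDiag_eq {n : ℕ} (f : Fin n × Fin n → ℝ) :
    ∑ r ∈ (Finset.univ : Finset (Fin n)).offDiag, f r
      = ∑ k : Fin n, ∑ l : Fin n, if k ≠ l then f (k, l) else 0 := by
  have h : (Finset.univ : Finset (Fin n)).offDiag
      = (Finset.univ ×ˢ Finset.univ).filter (fun a : Fin n × Fin n => a.1 ≠ a.2) := by
    ext; simp
  rw [h, Finset.sum_filter, Finset.sum_product]

lemma tri {n : ℕ} (hn : 2 ≤ n) (f : Fin n → Fin n → ℝ) :
    ∑ i : Fin n, ∑ j : Fin n, ∑ l : Fin n,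
      (if i ≠ j ∧ i ≠ l ∧ l ≠ j then f j l else 0)
    = ((n : ℝ) - 2) * ∑ j : Fin n, ∑ l : Fin n, (if l ≠ j then f j l else 0) := by
  rw [Finset.sum_comm]
  have h1 : ∀ j : Fin n, ∑ i : Fin n, ∑ l : Fin n,
      (if i ≠ j ∧ i ≠ l ∧ l ≠ j then f j l else 0)
      = ∑ l : Fin n, ∑ i : Fin n, (if i ≠ j ∧ i ≠ l ∧ l ≠ j then f j l else 0) :=
    fun j => Finset.sum_comm
  simp only [h1, Finset.mul_sum]
  refine Finset.sum_congr rfl fun j _ => Finset.sum_congr rfl fun l _ => ?_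
  by_cases hlj : l = j
  · simp [hlj]
  · have h2 : ∀ i : Fin n, (if i ≠ j ∧ i ≠ l ∧ l ≠ j then f j l else 0)
        = (if i ∈ ({j, l} : Finset (Fin n))ᶜ then f j l else 0) := by
      intro i
      simp only [Finset.mem_compl, Finset.mem_insert, Finset.mem_singleton]
      by_cases h : i = j <;> by_cases h' : i = l <;> simp [h, h', hlj]
    rw [if_pos hlj]
    simp only [h2]
    rw [Finset.sum_ite_mem, Finset.univ_inter, Finset.sum_const,
      Finset.card_compl, Finset.card_pair (Ne.symm hlj)]
    simp only [Fintype.card_fin, nsmul_eq_mul]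
    rw [Nat.cast_sub hn]
    norm_num

lemma sum_offDiag_swap {n : ℕ} (f : Fin n × Fin n → ℝ) :
    ∑ q ∈ (Finset.univ : Finset (Fin n)).offDiag, f q
      = ∑ q ∈ (Finset.univ : Finset (Fin n)).offDiag, f q.swap := by
  refine Finset.sum_nbij' (fun q => q.swap) (fun q => q.swap) ?_ ?_ ?_ ?_ ?_ <;>
    simp [Finset.mem_offDiag] <;> intro a b h <;> simp [h, Ne.symm h]

lemma outerTri {n : ℕ} (hn : 2 ≤ n) (g : Fin n → Fin n → ℝ)
    (C : Fin n → Fin n → Fin n → Prop) [inst : ∀ i j l, Decidable (C i j l)]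
    (hC : ∀ i j l, i ≠ j → (C i j l ↔ (i ≠ l ∧ l ≠ j))) :
    ∑ q ∈ (Finset.univ : Finset (Fin n)).offDiag, ∑ l : Fin n,
        (if C q.1 q.2 l then g q.2 l else 0)
      = ((n:ℝ) - 2) * ∑ j : Fin n, ∑ l : Fin n, (if l ≠ j then g j l else 0) := by
  rw [sum_offDiag_eq]
  have key : ∀ i j : Fin n,
      (if i ≠ j then ∑ l : Fin n, (if C (i, j).1 (i, j).2 l then g (i, j).2 l else 0) else 0)
      = ∑ l : Fin n, (if i ≠ j ∧ i ≠ l ∧ l ≠ j then g j l else 0) := by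
    intro i j
    by_cases h : i = j
    · simp [h]
    · rw [if_pos h]
      refine Finset.sum_congr rfl fun l _ => ?_
      by_cases h2 : C i j l
      · rw [if_pos h2, if_pos ⟨h, ((hC i j l h).1 h2)⟩]
      · rw [if_neg h2, if_neg (fun hc => h2 ((hC i j l h).2 ⟨hc.2.1, hc.2.2⟩))]
  simp only [key]
  exact tri hn g

lemma col1 {n : ℕ} (g : Fin n → Fin n → ℝ) (a b : Fin n) :
    ∑ r ∈ (Finset.univ : Finset (Fin n)).offDiag,
      (if r.1 = a ∧ r.2 ≠ b then g b r.2 else 0)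
      = ∑ l : Fin n, (if a ≠ l ∧ l ≠ b then g b l else 0) := by
  rw [sum_offDiag_eq, Finset.sum_comm]
  refine Finset.sum_congr rfl fun l _ => ?_
  have h2 : ∀ k : Fin n, (if k ≠ l then (if (k, l).1 = a ∧ (k, l).2 ≠ b then g b (k,l).2 else 0) else 0)
      = (if k = a then (if a ≠ l ∧ l ≠ b then g b l else 0) else 0) := by
    intro k
    by_cases h : k = a <;> by_cases h1 : k = l <;> by_cases h3 : l = b <;> simp_all
  simp only [h2]
  rw [Finset.sum_ite_eq' Finset.univ a]
  simp

lemma col2 {n : ℕ} (g : Fin n → Fin n → ℝ) (a b : Fin n) :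
    ∑ r ∈ (Finset.univ : Finset (Fin n)).offDiag,
      (if r.2 = a ∧ r.1 ≠ b then g b r.1 else 0)
      = ∑ k : Fin n, (if k ≠ a ∧ k ≠ b then g b k else 0) := by
  rw [sum_offDiag_eq]
  refine Finset.sum_congr rfl fun k _ => ?_
  have h2 : ∀ l : Fin n, (if k ≠ l then (if (k, l).2 = a ∧ (k, l).1 ≠ b then g b (k,l).1 else 0) else 0)
      = (if l = a then (if k ≠ a ∧ k ≠ b then g b k else 0) else 0) := by
    intro l
    by_cases h : l = a <;> by_cases h1 : k = l <;> by_cases h3 : k = b <;> simp_all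
  simp only [h2]
  rw [Finset.sum_ite_eq' Finset.univ a]
  simp

noncomputable def Bnd {n : ℕ} (p : Fin n → ℝ) (q r : Fin n × Fin n) : ℝ :=
  (if r = q then 1/16 else 0) + (if r = q.swap then 1/16 else 0)
  + (if r.1 = q.1 ∧ r.2 ≠ q.2 then p q.2 * p r.2 / 4 else 0)
  + (if r.2 = q.1 ∧ r.1 ≠ q.2 then p q.2 * p r.1 / 4 else 0)
  + (if r.1 = q.2 ∧ r.2 ≠ q.1 then p q.1 * p r.2 / 4 else 0)
  + (if r.2 = q.2 ∧ r.1 ≠ q.1 then p q.1 * p r.1 / 4 else 0)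

lemma sumB {n : ℕ} (hn : 2 ≤ n) (p : Fin n → ℝ) :
    ∑ q ∈ (Finset.univ : Finset (Fin n)).offDiag,
        ∑ r ∈ (Finset.univ : Finset (Fin n)).offDiag, Bnd p q r
      = (n:ℝ) * ((n:ℝ) - 1) / 8
        + ((n:ℝ) - 2) * ∑ q ∈ (Finset.univ : Finset (Fin n)).offDiag, p q.1 * p q.2 := by
  classical
  set D := (Finset.univ : Finset (Fin n)).offDiag with hD
  set g : Fin n → Fin n → ℝ := fun a b => p a * p b / 4 with hg
  have hcard : ((D.card : ℝ)) = (n:ℝ) * (n:ℝ) - (n:ℝ) := by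
    rw [hD, Finset.offDiag_card]
    simp only [Finset.card_univ, Fintype.card_fin]
    rw [Nat.cast_sub (Nat.le_mul_of_pos_left n (by omega))]
    push_cast; ring
  have hswapmem : ∀ q : Fin n × Fin n, q ∈ D → q.swap ∈ D := by
    intro q hq
    rw [hD, Finset.mem_offDiag] at hq ⊢
    exact ⟨Finset.mem_univ _, Finset.mem_univ _, Ne.symm hq.2.2⟩
  have hA1 : ∑ q ∈ D, ∑ r ∈ D, (if r = q then (1/16 : ℝ) else 0) = (D.card : ℝ) * (1/16) := by
    rw [Finset.sum_congr rfl fun q hq => by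
      rw [Finset.sum_ite_eq' D q (fun _ => (1/16 : ℝ)), if_pos hq]]
    rw [Finset.sum_const, nsmul_eq_mul]
  have hA2 : ∑ q ∈ D, ∑ r ∈ D, (if r = q.swap then (1/16 : ℝ) else 0) = (D.card : ℝ) * (1/16) := by
    rw [Finset.sum_congr rfl fun q hq => by
      rw [Finset.sum_ite_eq' D q.swap (fun _ => (1/16 : ℝ)), if_pos (hswapmem q hq)]]
    rw [Finset.sum_const, nsmul_eq_mul]
  have hN : ∑ j : Fin n, ∑ l : Fin n, (if l ≠ j then g j l else 0)
      = (∑ q ∈ D, p q.1 * p q.2) / 4 := by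
    rw [hD, sum_offDiag_eq, Finset.sum_div]
    refine Finset.sum_congr rfl fun j _ => ?_
    rw [Finset.sum_div]
    refine Finset.sum_congr rfl fun l _ => ?_
    rw [hg]
    by_cases h : l = j
    · simp [h]
    · rw [if_pos h, if_pos (Ne.symm h)]
  have hA3 : ∑ q ∈ D, ∑ r ∈ D, (if r.1 = q.1 ∧ r.2 ≠ q.2 then p q.2 * p r.2 / 4 else 0)
      = ((n:ℝ) - 2) * ∑ j : Fin n, ∑ l : Fin n, (if l ≠ j then g j l else 0) := by
    rw [Finset.sum_congr rfl fun q _ => col1 g q.1 q.2]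
    exact outerTri hn g (fun i j l => i ≠ l ∧ l ≠ j) (fun i j l _ => Iff.rfl)
  have hA4 : ∑ q ∈ D, ∑ r ∈ D, (if r.2 = q.1 ∧ r.1 ≠ q.2 then p q.2 * p r.1 / 4 else 0)
      = ((n:ℝ) - 2) * ∑ j : Fin n, ∑ l : Fin n, (if l ≠ j then g j l else 0) := by
    rw [Finset.sum_congr rfl fun q _ => col2 g q.1 q.2]
    refine outerTri hn g (fun i j k => k ≠ i ∧ k ≠ j) (fun i j l _ => ?_)
    constructor
    · rintro ⟨a, b⟩; exact ⟨Ne.symm a, b⟩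
    · rintro ⟨a, b⟩; exact ⟨Ne.symm a, b⟩
  have hA5 : ∑ q ∈ D, ∑ r ∈ D, (if r.1 = q.2 ∧ r.2 ≠ q.1 then p q.1 * p r.2 / 4 else 0)
      = ((n:ℝ) - 2) * ∑ j : Fin n, ∑ l : Fin n, (if l ≠ j then g j l else 0) := by
    rw [Finset.sum_congr rfl fun q _ => col1 g q.2 q.1]
    rw [sum_offDiag_swap]
    simp only [Prod.fst_swap, Prod.snd_swap]
    exact outerTri hn g (fun i j l => i ≠ l ∧ l ≠ j) (fun i j l _ => Iff.rfl)
  have hA6 : ∑ q ∈ D, ∑ r ∈ D, (if r.2 = q.2 ∧ r.1 ≠ q.1 then p q.1 * p r.1 / 4 else 0)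
      = ((n:ℝ) - 2) * ∑ j : Fin n, ∑ l : Fin n, (if l ≠ j then g j l else 0) := by
    rw [Finset.sum_congr rfl fun q _ => col2 g q.2 q.1]
    rw [sum_offDiag_swap]
    simp only [Prod.fst_swap, Prod.snd_swap]
    refine outerTri hn g (fun i j k => k ≠ i ∧ k ≠ j) (fun i j l _ => ?_)
    constructor
    · rintro ⟨a, b⟩; exact ⟨Ne.symm a, b⟩
    · rintro ⟨a, b⟩; exact ⟨Ne.symm a, b⟩
  simp only [Bnd, Finset.sum_add_distrib]
  rw [hA1, hA2, hA3, hA4, hA5, hA6, hN, hcard]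
  ring

/-- Let `Z_1, …, Z_n` be jointly independent random variables with values in
`{−1/2, 1/2}`, `E[Z_k] = p_k`, and suppose `p_{k₁} p_{k₂} ≥ 0` for all `k₁ ≠ k₂`.
For `T = Σ_{k₁ ≠ k₂} Z_{k₁} Z_{k₂}` (sum over ordered pairs of distinct indices),
`Var(T) ≤ n(n−1)/8 + (n−2)·E[T]`. -/
theorem testing_statistic_variance {Ω : Type*} [MeasurableSpace Ω] (P : Measure Ω)
    [IsProbabilityMeasure P] (n : ℕ) (Z : Fin n → Ω → ℝ)
    (hmeas : ∀ k, Measurable (Z k))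
    (hval : ∀ k ω, Z k ω = -(1 / 2) ∨ Z k ω = 1 / 2)
    (hindep : iIndepFun Z P)
    (p : Fin n → ℝ) (hp : ∀ k, ∫ ω, Z k ω ∂P = p k)
    (hpos : ∀ k₁ k₂ : Fin n, k₁ ≠ k₂ → 0 ≤ p k₁ * p k₂) :
    variance (fun ω => ∑ q ∈ Finset.univ.offDiag, Z q.1 ω * Z q.2 ω) P ≤
      (n : ℝ) * (n - 1) / 8 +
        ((n : ℝ) - 2) * ∫ ω, ∑ q ∈ Finset.univ.offDiag, Z q.1 ω * Z q.2 ω ∂P := by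
  classical
  by_cases hn : n < 2
  · have hDe : (Finset.univ : Finset (Fin n)).offDiag = ∅ := by
      apply Finset.eq_empty_of_forall_notMem
      intro q hq
      rw [Finset.mem_offDiag] at hq
      have h1 := q.1.isLt
      have h2 := q.2.isLt
      exact hq.2.2 (Fin.ext (by omega))
    simp only [hDe, Finset.sum_empty]
    rw [integral_const]
    simp only [measure_univ, ENNReal.toReal_one, smul_eq_mul, mul_zero, mul_one]
    have hv : variance (fun _ : Ω => (0:ℝ)) P = variance 0 P := rfl
    rw [hv, variance_zero]
    interval_cases n <;> norm_num
  push_neg at hn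
  -- basic pointwise facts
  have hsq : ∀ k ω, Z k ω * Z k ω = 1/4 := by
    intro k ω; rcases hval k ω with h | h <;> rw [h] <;> norm_num
  have hbd : ∀ k ω, ‖Z k ω‖ ≤ 1/2 := by
    intro k ω; rcases hval k ω with h | h <;> rw [h] <;> simp
  have hXnorm : ∀ (i j : Fin n) ω, ‖Z i ω * Z j ω‖ ≤ 1/4 := by
    intro i j ω
    rw [norm_mul]
    calc ‖Z i ω‖ * ‖Z j ω‖ ≤ (1/2) * (1/2) :=
          mul_le_mul (hbd _ _) (hbd _ _) (norm_nonneg _) (by norm_num)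
      _ = 1/4 := by norm_num
  have hE2 : ∀ i j : Fin n, i ≠ j → ∫ ω, Z i ω * Z j ω ∂P = p i * p j := by
    intro i j hij
    have h := (hindep.indepFun hij).integral_mul_eq_mul_integral
      (hmeas i).aestronglyMeasurable (hmeas j).aestronglyMeasurable
    rw [← hp i, ← hp j, ← h]; rfl
  have hXint : ∀ q : Fin n × Fin n, Integrable (fun ω => Z q.1 ω * Z q.2 ω) P := by
    intro q
    exact Integrable.mono' (integrable_const (1/4 : ℝ))
      ((hmeas q.1).mul (hmeas q.2)).aestronglyMeasurable
      (ae_of_all _ fun ω => hXnorm q.1 q.2 ω)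
  have hXXint : ∀ q r : Fin n × Fin n,
      Integrable (fun ω => (Z q.1 ω * Z q.2 ω) * (Z r.1 ω * Z r.2 ω)) P := by
    intro q r
    refine Integrable.mono' (integrable_const (1/16 : ℝ))
      (((hmeas q.1).mul (hmeas q.2)).mul ((hmeas r.1).mul (hmeas r.2))).aestronglyMeasurable
      (ae_of_all _ fun ω => ?_)
    rw [norm_mul]
    calc ‖Z q.1 ω * Z q.2 ω‖ * ‖Z r.1 ω * Z r.2 ω‖ ≤ (1/4) * (1/4) :=
          mul_le_mul (hXnorm _ _ _) (hXnorm _ _ _) (norm_nonneg _) (by norm_num)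
      _ = 1/16 := by norm_num
  set D := (Finset.univ : Finset (Fin n)).offDiag with hD
  -- expectation of T
  have hM : ∫ ω, (∑ q ∈ D, Z q.1 ω * Z q.2 ω) ∂P = ∑ q ∈ D, p q.1 * p q.2 := by
    rw [integral_finset_sum _ (fun q _ => hXint q)]
    exact Finset.sum_congr rfl fun q hq => hE2 q.1 q.2 (Finset.mem_offDiag.1 hq).2.2
  -- Memℒp 2
  have hT2 : MemLp (fun ω => ∑ q ∈ D, Z q.1 ω * Z q.2 ω) 2 P := by
    refine MemLp.of_bound
      (Finset.aestronglyMeasurable_fun_sum _ fun q _ =>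
        ((hmeas q.1).mul (hmeas q.2)).aestronglyMeasurable)
      ((D.card : ℝ) * (1/4)) (ae_of_all _ fun ω => ?_)
    calc ‖∑ q ∈ D, Z q.1 ω * Z q.2 ω‖ ≤ ∑ q ∈ D, ‖Z q.1 ω * Z q.2 ω‖ := norm_sum_le _ _
      _ ≤ ∑ q ∈ D, (1/4 : ℝ) := Finset.sum_le_sum fun q _ => hXnorm _ _ _
      _ = (D.card : ℝ) * (1/4) := by rw [Finset.sum_const, nsmul_eq_mul]
  rw [variance_eq_sub hT2]
  have hint2 : ∫ ω, (∑ q ∈ D, Z q.1 ω * Z q.2 ω)^2 ∂P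
      = ∑ q ∈ D, ∑ r ∈ D, ∫ ω, (Z q.1 ω * Z q.2 ω) * (Z r.1 ω * Z r.2 ω) ∂P := by
    have hptw : ∀ ω : Ω, (∑ q ∈ D, Z q.1 ω * Z q.2 ω)^2
        = ∑ q ∈ D, ∑ r ∈ D, (Z q.1 ω * Z q.2 ω) * (Z r.1 ω * Z r.2 ω) := fun ω => by
      rw [sq, Finset.sum_mul_sum]
    simp only [hptw]
    rw [integral_finset_sum _ (fun q _ => integrable_finset_sum _ (fun r _ => hXXint q r))]
    exact Finset.sum_congr rfl fun q _ => integral_finset_sum _ (fun r _ => hXXint q r)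
  show (∫ ω, (∑ q ∈ D, Z q.1 ω * Z q.2 ω)^2 ∂P)
      - (∫ ω, ∑ q ∈ D, Z q.1 ω * Z q.2 ω ∂P)^2 ≤ _
  rw [hint2, hM]
  -- helper integral values
  have hquarter : ∀ m a b : Fin n, a ≠ b →
      ∫ ω, (Z m ω * Z m ω) * (Z a ω * Z b ω) ∂P = p a * p b / 4 := by
    intro m a b hab
    have e : (fun ω => (Z m ω * Z m ω) * (Z a ω * Z b ω))
        = fun ω => (1/4 : ℝ) * (Z a ω * Z b ω) := funext fun ω => by rw [hsq]
    rw [show (∫ ω, (Z m ω * Z m ω) * (Z a ω * Z b ω) ∂P)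
        = ∫ ω, (1/4 : ℝ) * (Z a ω * Z b ω) ∂P from congrArg _ e]
    rw [integral_const_mul, hE2 a b hab]; ring
  have h16 : ∀ i j : Fin n, ∫ ω, (Z i ω * Z j ω) * (Z i ω * Z j ω) ∂P = 1/16 := by
    intro i j
    have e : (fun ω => (Z i ω * Z j ω) * (Z i ω * Z j ω)) = fun _ => (1/16 : ℝ) :=
      funext fun ω => by
        rw [show (Z i ω * Z j ω) * (Z i ω * Z j ω)
            = (Z i ω * Z i ω) * (Z j ω * Z j ω) from by ring, hsq, hsq]; norm_num
    rw [show (∫ ω, (Z i ω * Z j ω) * (Z i ω * Z j ω) ∂P)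
        = ∫ _, (1/16 : ℝ) ∂P from congrArg _ e]
    simp
  have hdisj : ∀ i j k l : Fin n, i ≠ j → k ≠ l → i ≠ k → i ≠ l → j ≠ k → j ≠ l →
      ∫ ω, (Z i ω * Z j ω) * (Z k ω * Z l ω) ∂P = (p i * p j) * (p k * p l) := by
    intro i j k l hij hkl hik hil hjk hjl
    have h := (hindep.indepFun_mul_mul hmeas i j k l hik hil hjk hjl).integral_mul_eq_mul_integral
      ((hmeas i).mul (hmeas j)).aestronglyMeasurable
      ((hmeas k).mul (hmeas l)).aestronglyMeasurable
    rw [← hE2 i j hij, ← hE2 k l hkl]; exact h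
  have key : ∀ q ∈ D, ∀ r ∈ D,
      (∫ ω, (Z q.1 ω * Z q.2 ω) * (Z r.1 ω * Z r.2 ω) ∂P)
        - (p q.1 * p q.2) * (p r.1 * p r.2) ≤ Bnd p q r := by
    rintro ⟨i, j⟩ hq ⟨k, l⟩ hr
    have hij : i ≠ j := (Finset.mem_offDiag.1 hq).2.2
    have hkl : k ≠ l := (Finset.mem_offDiag.1 hr).2.2
    simp only []
    by_cases hki : k = i
    · subst hki
      by_cases hlj : l = j
      · subst hlj
        rw [h16 k l]
        simp only [Bnd, Prod.swap_prod_mk, Prod.mk.injEq]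
        simp [hij, Ne.symm hij, hkl]
        nlinarith [sq_nonneg (p k * p l)]
      · -- share first coords : cond3
        have hjl : j ≠ l := fun h => hlj h.symm
        rw [show (∫ ω, (Z k ω * Z j ω) * (Z k ω * Z l ω) ∂P)
            = ∫ ω, (Z k ω * Z k ω) * (Z j ω * Z l ω) ∂P from
          congrArg _ (funext fun ω => by ring), hquarter k j l hjl]
        simp only [Bnd, Prod.swap_prod_mk, Prod.mk.injEq]
        simp [hij, Ne.symm hij, hkl, hlj, Ne.symm hkl]
        nlinarith [hpos j l hjl, sq_nonneg (p k)]
    · by_cases hli : l = i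
      · subst hli
        by_cases hkj : k = j
        · subst hkj
          rw [show (∫ ω, (Z l ω * Z k ω) * (Z k ω * Z l ω) ∂P)
              = ∫ ω, (Z l ω * Z k ω) * (Z l ω * Z k ω) ∂P from
            congrArg _ (funext fun ω => by ring), h16 l k]
          simp only [Bnd, Prod.swap_prod_mk, Prod.mk.injEq]
          simp [hij, Ne.symm hij, hkl]
          nlinarith [sq_nonneg (p l * p k)]
        · -- cond4
          have hjk : j ≠ k := fun h => hkj h.symm
          rw [show (∫ ω, (Z l ω * Z j ω) * (Z k ω * Z l ω) ∂P)
              = ∫ ω, (Z l ω * Z l ω) * (Z j ω * Z k ω) ∂P from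
            congrArg _ (funext fun ω => by ring), hquarter l j k hjk]
          simp only [Bnd, Prod.swap_prod_mk, Prod.mk.injEq]
          simp [hij, Ne.symm hij, hkl, hkj, hki, Ne.symm hkl]
          nlinarith [hpos j k hjk, sq_nonneg (p l)]
      · by_cases hkj : k = j
        · subst hkj
          -- cond5
          have hil : i ≠ l := fun h => hli h.symm
          rw [show (∫ ω, (Z i ω * Z k ω) * (Z k ω * Z l ω) ∂P)
              = ∫ ω, (Z k ω * Z k ω) * (Z i ω * Z l ω) ∂P from
            congrArg _ (funext fun ω => by ring), hquarter k i l hil]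
          simp only [Bnd, Prod.swap_prod_mk, Prod.mk.injEq]
          simp [hij, Ne.symm hij, hkl, hki, hli, Ne.symm hkl]
          nlinarith [hpos i l hil, sq_nonneg (p k)]
        · by_cases hlj : l = j
          · subst hlj
            -- cond6
            have hik : i ≠ k := fun h => hki h.symm
            rw [show (∫ ω, (Z i ω * Z l ω) * (Z k ω * Z l ω) ∂P)
                = ∫ ω, (Z l ω * Z l ω) * (Z i ω * Z k ω) ∂P from
              congrArg _ (funext fun ω => by ring), hquarter l i k hik]
            simp only [Bnd, Prod.swap_prod_mk, Prod.mk.injEq]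
            simp [hij, Ne.symm hij, hkl, hki, hkj, hli]
            nlinarith [hpos i k hik, sq_nonneg (p l)]
          · -- all distinct
            have hik : i ≠ k := fun h => hki h.symm
            have hil : i ≠ l := fun h => hli h.symm
            have hjk : j ≠ k := fun h => hkj h.symm
            have hjl : j ≠ l := fun h => hlj h.symm
            rw [hdisj i j k l hij hkl hik hil hjk hjl]
            simp only [Bnd, Prod.swap_prod_mk, Prod.mk.injEq]
            simp [hij, hkl, hki, hli, hkj, hlj]
  have hM2 : (∑ q ∈ D, p q.1 * p q.2)^2
      = ∑ q ∈ D, ∑ r ∈ D, (p q.1 * p q.2) * (p r.1 * p r.2) := by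
    rw [sq, Finset.sum_mul_sum]
  calc (∑ q ∈ D, ∑ r ∈ D, ∫ ω, (Z q.1 ω * Z q.2 ω) * (Z r.1 ω * Z r.2 ω) ∂P)
        - (∑ q ∈ D, p q.1 * p q.2)^2
      = ∑ q ∈ D, ∑ r ∈ D,
          ((∫ ω, (Z q.1 ω * Z q.2 ω) * (Z r.1 ω * Z r.2 ω) ∂P)
            - (p q.1 * p q.2) * (p r.1 * p r.2)) := by
        rw [hM2, ← Finset.sum_sub_distrib]
        exact Finset.sum_congr rfl fun q _ => by rw [← Finset.sum_sub_distrib]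
    _ ≤ ∑ q ∈ D, ∑ r ∈ D, Bnd p q r :=
        Finset.sum_le_sum fun q hq => Finset.sum_le_sum fun r hr => key q hq r hr
    _ = (n:ℝ) * ((n:ℝ) - 1) / 8 + ((n:ℝ) - 2) * ∑ q ∈ D, p q.1 * p q.2 := sumB hn p
end
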